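/- arXiv:0810.1718 — 7 statements merged into one kernel-verified Lean document; each statement's English description precedes it below -/
import Mathlib

section
/- If (X_n) is a stationary second-order process with covariance σ_X, and (T_n) is a random walk with i.i.d. positive integer increments independent of X, with T_0 = 0, then the sampled process Y_n = X_{T_n} is stationary with covariance σ_Y(h) = E[σ_X(T_h)] = Σ_{j≥h} σ_X(j) S^{*h}(j) for h ≥ 1, where S^{*h} is the h-fold convolution of the increment law S. -/
open MeasureTheory ProbabilityTheory Real
open scoped ENNReal NNReal

section Aux

variable {Ω : Type*} [MeasureSpace Ω] [IsProbabilityMeasure (ℙ : Measure Ω)]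

/-- Key decomposition: for a countably-valued `N` independent of each `W k`,
`∫ W (N ω) ω = ∑' k, (∫ W k) * ℙ(N = k)`. -/
lemma aux_key {κ : Type*} [MeasurableSpace κ] [MeasurableSingletonClass κ] [Countable κ]
    [Nonempty κ]
    (N : Ω → κ) (hN : Measurable N) (W : κ → Ω → ℝ)
    (hWm : ∀ k, Measurable (W k)) (hWi : ∀ k, Integrable (W k))
    (hind : ∀ k, IndepFun (W k) N) (C : ℝ)
    (hC : ∀ k, ∫ ω, |W k ω| ≤ C) :
    ∫ ω, W (N ω) ω = ∑' k, (∫ ω, W k ω) * (ℙ (N ⁻¹' {k})).toReal := by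
  classical
  set A : κ → Set Ω := fun k => N ⁻¹' {k} with hA
  have hAm : ∀ k, MeasurableSet (A k) := fun k => hN (measurableSet_singleton k)
  have hdisj : Pairwise (Function.onFun Disjoint A) := by
    intro i j hij
    refine Set.disjoint_left.2 fun ω hi hj => hij ?_
    have h1 : N ω = i := hi
    have h2 : N ω = j := hj
    rw [← h1, h2]
  have hunion : (⋃ k, A k) = Set.univ := by
    ext ω; simp [hA]
  set I : κ → Ω → ℝ := fun k => (A k).indicator (fun _ => 1) with hI
  have hIeq : ∀ k, I k = (fun x : κ => if x = k then (1:ℝ) else 0) ∘ N := by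
    intro k; funext ω
    by_cases h : N ω = k <;> simp [hI, hA, Set.indicator, h]
  have hIint : ∀ k, Integrable (I k) := fun k => (integrable_const 1).indicator (hAm k)
  have hIval : ∀ k, ∫ ω, I k ω = (ℙ (A k)).toReal := by
    intro k
    simpa [measureReal_def] using integral_indicator_const (1:ℝ) (hAm k)
  have hindI : ∀ (φ : ℝ → ℝ), Measurable φ → ∀ k,
      IndepFun (fun ω => φ (W k ω)) (I k) ℙ := by
    intro φ hφ k
    rw [hIeq k]
    exact (hind k).comp hφ (measurable_of_countable _)
  have hsetint : ∀ k, ∫ ω in A k, W k ω = (∫ ω, W k ω) * (ℙ (A k)).toReal := by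
    intro k
    have h1 : ∫ ω in A k, W k ω = ∫ ω, W k ω * I k ω := by
      rw [← integral_indicator (hAm k)]
      congr 1; funext ω
      by_cases h : ω ∈ A k <;> simp [hI, Set.indicator, h]
    have h2 : ∫ ω, W k ω * I k ω = (∫ ω, W k ω) * ∫ ω, I k ω :=
      (hindI id measurable_id k).integral_mul_eq_mul_integral (hWi k).aestronglyMeasurable (hIint k).aestronglyMeasurable
    rw [h1, h2, hIval k]
  have hsetintabs : ∀ k, ∫ ω in A k, |W k ω| = (∫ ω, |W k ω|) * (ℙ (A k)).toReal := by
    intro k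
    have h1 : ∫ ω in A k, |W k ω| = ∫ ω, |W k ω| * I k ω := by
      rw [← integral_indicator (hAm k)]
      congr 1; funext ω
      by_cases h : ω ∈ A k <;> simp [hI, Set.indicator, h]
    have h2 : ∫ ω, |W k ω| * I k ω = (∫ ω, |W k ω|) * ∫ ω, I k ω :=
      (hindI (fun x => |x|) measurable_abs k).integral_mul_eq_mul_integral
        (hWi k).abs.aestronglyMeasurable (hIint k).aestronglyMeasurable
    rw [h1, h2, hIval k]
  set F : Ω → ℝ := fun ω => W (N ω) ω with hF
  have hFeq : ∀ k, ∀ ω ∈ A k, F ω = W k ω := by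
    intro k ω hω
    have h : N ω = k := hω
    simp [hF, h]
  have hFm : Measurable F := by
    intro B hB
    have hpre : F ⁻¹' B = ⋃ k, A k ∩ W k ⁻¹' B := by
      ext ω
      simp only [Set.mem_preimage, Set.mem_iUnion, Set.mem_inter_iff, hA,
        Set.mem_singleton_iff]
      constructor
      · intro h; exact ⟨N ω, rfl, h⟩
      · rintro ⟨k, hk, h⟩
        show W (N ω) ω ∈ B
        rw [hk]; exact h
    rw [hpre]
    exact MeasurableSet.iUnion fun k => (hAm k).inter (hWm k hB)
  have hCnn : 0 ≤ C :=
    le_trans (integral_nonneg fun ω => abs_nonneg _) (hC (Classical.arbitrary κ))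
  have hFint : Integrable F := by
    refine ⟨hFm.aestronglyMeasurable, ?_⟩
    rw [hasFiniteIntegral_def]
    have h0 : ∫⁻ ω, (‖F ω‖₊ : ℝ≥0∞) ∂ℙ = ∑' k, ∫⁻ ω in A k, (‖F ω‖₊ : ℝ≥0∞) ∂ℙ := by
      conv_lhs => rw [← setLIntegral_univ, ← hunion]
      exact lintegral_iUnion hAm hdisj _
    have h1 : ∀ k, ∫⁻ ω in A k, (‖F ω‖₊ : ℝ≥0∞) ∂ℙ ≤ ENNReal.ofReal C * ℙ (A k) := by
      intro k
      have e1 : ∫⁻ ω in A k, (‖F ω‖₊ : ℝ≥0∞) ∂ℙ = ∫⁻ ω in A k, (‖W k ω‖₊ : ℝ≥0∞) ∂ℙ := by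
        refine setLIntegral_congr_fun (hAm k) (fun ω hω => ?_)
        rw [hFeq k ω hω]
      have e2 : ∫⁻ ω in A k, (‖W k ω‖₊ : ℝ≥0∞) ∂ℙ
          = ENNReal.ofReal (∫ ω in A k, ‖W k ω‖) :=
        (ofReal_integral_norm_eq_lintegral_enorm ((hWi k).integrableOn)).symm
      have e3 : ∫ ω in A k, ‖W k ω‖ = (∫ ω, |W k ω|) * (ℙ (A k)).toReal := by
        simpa [Real.norm_eq_abs] using hsetintabs k
      rw [e1, e2, e3]
      calc ENNReal.ofReal ((∫ ω, |W k ω|) * (ℙ (A k)).toReal)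
          ≤ ENNReal.ofReal (C * (ℙ (A k)).toReal) := by
            apply ENNReal.ofReal_le_ofReal
            exact mul_le_mul_of_nonneg_right (hC k) ENNReal.toReal_nonneg
        _ = ENNReal.ofReal C * ENNReal.ofReal ((ℙ (A k)).toReal) :=
            ENNReal.ofReal_mul hCnn
        _ = ENNReal.ofReal C * ℙ (A k) := by
            rw [ENNReal.ofReal_toReal (measure_ne_top _ _)]
    calc ∫⁻ ω, (‖F ω‖₊ : ℝ≥0∞) ∂ℙ = ∑' k, ∫⁻ ω in A k, (‖F ω‖₊ : ℝ≥0∞) ∂ℙ := h0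
      _ ≤ ∑' k, ENNReal.ofReal C * ℙ (A k) := ENNReal.tsum_le_tsum h1
      _ = ENNReal.ofReal C * ∑' k, ℙ (A k) := ENNReal.tsum_mul_left
      _ = ENNReal.ofReal C * ℙ (⋃ k, A k) := by rw [measure_iUnion hdisj hAm]
      _ < ⊤ := by
          rw [hunion]
          simp [ENNReal.mul_lt_top, ENNReal.ofReal_lt_top]
  have hsplit : ∫ ω, F ω = ∑' k, ∫ ω in A k, F ω := by
    conv_lhs => rw [← setIntegral_univ, ← hunion]
    exact integral_iUnion hAm hdisj (hunion ▸ hFint.integrableOn)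
  show ∫ ω, F ω = _
  rw [hsplit]
  refine tsum_congr fun k => ?_
  rw [setIntegral_congr_fun (hAm k) (fun ω hω => hFeq k ω hω), hsetint k]

/-- Integral of a bounded function of a discrete random variable as a sum over atoms. -/
lemma aux_discrete (N : Ω → ℕ) (hN : Measurable N) (f : ℕ → ℝ) (C : ℝ)
    (hC : ∀ j, |f j| ≤ C) :
    ∫ ω, f (N ω) = ∑' j, f j * (((ℙ : Measure Ω).map N) {j}).toReal := by
  have hmap : IsProbabilityMeasure ((ℙ : Measure Ω).map N) :=
    Measure.isProbabilityMeasure_map hN.aemeasurable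
  have hint : Integrable f ((ℙ : Measure Ω).map N) := by
    refine Integrable.mono' (integrable_const C)
      (measurable_of_countable f).aestronglyMeasurable
      (Filter.Eventually.of_forall fun j => ?_)
    simpa [Real.norm_eq_abs] using hC j
  rw [← integral_map hN.aemeasurable (measurable_of_countable f).aestronglyMeasurable,
    integral_countable' hint]
  exact tsum_congr fun j => by rw [smul_eq_mul, mul_comm, measureReal_def]

/-- Blocks of sums of i.i.d. increments have the same law. -/
lemma aux_law (Δ : ℕ → Ω → ℕ) (hΔmeas : ∀ j, Measurable (Δ j))
    (hΔindep : iIndepFun Δ ℙ)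
    (hΔid : ∀ i j, IdentDistrib (Δ i) (Δ j) ℙ ℙ) :
    ∀ (h n : ℕ),
      (ℙ : Measure Ω).map (fun ω => ∑ j ∈ Finset.Ico n (n + h), Δ j ω) =
      (ℙ : Measure Ω).map (fun ω => ∑ j ∈ Finset.range h, Δ j ω) := by
  intro h
  induction h with
  | zero => intro n; simp
  | succ h ih =>
    intro n
    have hSm : ∀ (s : Finset ℕ), Measurable (fun ω => ∑ j ∈ s, Δ j ω) :=
      fun s => Finset.measurable_sum s (fun j _ => hΔmeas j)
    have e1 : (fun ω => ∑ j ∈ Finset.Ico n (n + (h + 1)), Δ j ω)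
        = fun ω => (∑ j ∈ Finset.Ico n (n + h), Δ j ω) + Δ (n + h) ω := by
      funext ω
      rw [show n + (h + 1) = (n + h) + 1 by omega]
      exact Finset.sum_Ico_succ_top (Nat.le_add_right n h) _
    have e2 : (fun ω => ∑ j ∈ Finset.range (h + 1), Δ j ω)
        = fun ω => (∑ j ∈ Finset.range h, Δ j ω) + Δ h ω := by
      funext ω; exact Finset.sum_range_succ _ _
    have hfe : ∀ (s : Finset ℕ), (∑ j ∈ s, Δ j) = fun ω => ∑ j ∈ s, Δ j ω := by
      intro s; funext ω; simp
    have ind1 : IndepFun (fun ω => ∑ j ∈ Finset.Ico n (n + h), Δ j ω) (Δ (n + h)) ℙ := by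
      have := hΔindep.indepFun_finsetSum_of_notMem hΔmeas
        (s := Finset.Ico n (n + h)) (i := n + h) (by simp)
      rwa [hfe] at this
    have ind2 : IndepFun (fun ω => ∑ j ∈ Finset.range h, Δ j ω) (Δ h) ℙ := by
      have := hΔindep.indepFun_finsetSum_of_notMem hΔmeas
        (s := Finset.range h) (i := h) (by simp)
      rwa [hfe] at this
    have key1 := (indepFun_iff_map_prod_eq_prod_map_map (hSm _).aemeasurable
      (hΔmeas (n + h)).aemeasurable).1 ind1
    have key2 := (indepFun_iff_map_prod_eq_prod_map_map (hSm _).aemeasurable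
      (hΔmeas h).aemeasurable).1 ind2
    have hprod : (ℙ : Measure Ω).map
          (fun ω => ((∑ j ∈ Finset.Ico n (n + h), Δ j ω), Δ (n + h) ω))
        = (ℙ : Measure Ω).map
          (fun ω => ((∑ j ∈ Finset.range h, Δ j ω), Δ h ω)) := by
      rw [key1, key2, ih n, (hΔid (n + h) h).map_eq]
    calc (ℙ : Measure Ω).map (fun ω => ∑ j ∈ Finset.Ico n (n + (h + 1)), Δ j ω)
        = (ℙ : Measure Ω).map ((fun p : ℕ × ℕ => p.1 + p.2) ∘
            (fun ω => ((∑ j ∈ Finset.Ico n (n + h), Δ j ω), Δ (n + h) ω))) := by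
          rw [e1]; rfl
      _ = ((ℙ : Measure Ω).map
            (fun ω => ((∑ j ∈ Finset.Ico n (n + h), Δ j ω), Δ (n + h) ω))).map
            (fun p : ℕ × ℕ => p.1 + p.2) :=
          (Measure.map_map measurable_add ((hSm _).prodMk (hΔmeas _))).symm
      _ = ((ℙ : Measure Ω).map
            (fun ω => ((∑ j ∈ Finset.range h, Δ j ω), Δ h ω))).map
            (fun p : ℕ × ℕ => p.1 + p.2) := by rw [hprod]
      _ = (ℙ : Measure Ω).map ((fun p : ℕ × ℕ => p.1 + p.2) ∘
            (fun ω => ((∑ j ∈ Finset.range h, Δ j ω), Δ h ω))) :=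
          Measure.map_map measurable_add ((hSm _).prodMk (hΔmeas _))
      _ = (ℙ : Measure Ω).map (fun ω => ∑ j ∈ Finset.range (h + 1), Δ j ω) := by
          rw [e2]; rfl

end Aux

/-- Random sampling of a stationary second-order process along a random walk:
the sampled process `Y n = X (T n)` is (second-order) stationary, its covariance is
`σ_Y h = E[σ_X (T h)]`, and for `h ≥ 1` this equals `∑_{j} σ_X(j) S^{*h}(j)`,
where `S^{*h}` is the law of `T h` (the `h`-fold convolution of the increment law). -/
theorem sampled_process_stationary_covariance
    {Ω : Type*} [MeasureSpace Ω] [IsProbabilityMeasure (ℙ : Measure Ω)]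
    (X : ℕ → Ω → ℝ) (Δ : ℕ → Ω → ℕ)
    (hXmeas : ∀ n, Measurable (X n))
    (hX2 : ∀ n, MemLp (X n) 2)
    (hΔmeas : ∀ j, Measurable (Δ j))
    (hΔpos : ∀ j ω, 1 ≤ Δ j ω)
    (hΔindep : iIndepFun Δ)
    (hΔid : ∀ i j, IdentDistrib (Δ i) (Δ j))
    (hindep : IndepFun (fun ω (n : ℕ) => X n ω) (fun ω (n : ℕ) => Δ n ω))
    (μ : ℝ) (σX : ℕ → ℝ)
    (hmean : ∀ n, ∫ ω, X n ω = μ)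
    (hcov : ∀ n h, ∫ ω, (X n ω - μ) * (X (n + h) ω - μ) = σX h)
    (T : ℕ → Ω → ℕ) (hT : ∀ n ω, T n ω = ∑ j ∈ Finset.range n, Δ j ω)
    (Y : ℕ → Ω → ℝ) (hY : ∀ n ω, Y n ω = X (T n ω) ω) :
    (∀ n, ∫ ω, Y n ω = μ) ∧
    (∀ n h, ∫ ω, (Y n ω - μ) * (Y (n + h) ω - μ) = ∫ ω, σX (T h ω)) ∧
    (∀ h, 1 ≤ h →
      ∫ ω, σX (T h ω) =
        ∑' j : ℕ, σX j * (((ℙ : Measure Ω).map (T h)) {j}).toReal) := by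
  classical
  -- measurability of T
  have hTm : ∀ n, Measurable (T n) := by
    intro n
    have : T n = fun ω => ∑ j ∈ Finset.range n, Δ j ω := funext (hT n)
    rw [this]
    exact Finset.measurable_sum _ fun j _ => hΔmeas j
  -- basic integrability facts
  have hXint : ∀ s, Integrable (X s) := fun s => (hX2 s).integrable one_le_two
  have hgsq_int : ∀ s, Integrable (fun ω => (X s ω - μ) ^ 2) :=
    fun s => ((hX2 s).sub (memLp_const μ)).integrable_sq
  have hgsq : ∀ s, ∫ ω, (X s ω - μ) ^ 2 = σX 0 := by
    intro s
    have hc := hcov s 0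
    rw [Nat.add_zero] at hc
    rw [← hc]
    congr 1; funext ω; ring
  have hprod_int : ∀ s t, Integrable (fun ω => (X s ω - μ) * (X t ω - μ)) := by
    intro s t
    have hmaj : Integrable (fun ω => ((X s ω - μ) ^ 2 + (X t ω - μ) ^ 2) / 2) :=
      ((hgsq_int s).add (hgsq_int t)).div_const 2
    refine Integrable.mono' hmaj
      (((hXmeas s).sub measurable_const).mul
        ((hXmeas t).sub measurable_const)).aestronglyMeasurable
      (Filter.Eventually.of_forall fun ω => ?_)
    rw [Real.norm_eq_abs, abs_mul]
    nlinarith [sq_nonneg (|X s ω - μ| - |X t ω - μ|), sq_abs (X s ω - μ),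
      sq_abs (X t ω - μ), abs_nonneg (X s ω - μ), abs_nonneg (X t ω - μ)]
  have habs : ∀ s t, ∫ ω, |(X s ω - μ) * (X t ω - μ)| ≤ σX 0 := by
    intro s t
    have hmaj : Integrable (fun ω => ((X s ω - μ) ^ 2 + (X t ω - μ) ^ 2) / 2) :=
      ((hgsq_int s).add (hgsq_int t)).div_const 2
    calc ∫ ω, |(X s ω - μ) * (X t ω - μ)|
        ≤ ∫ ω, ((X s ω - μ) ^ 2 + (X t ω - μ) ^ 2) / 2 := by
          refine integral_mono (hprod_int s t).abs hmaj fun ω => ?_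
          rw [abs_mul]
          nlinarith [sq_nonneg (|X s ω - μ| - |X t ω - μ|), sq_abs (X s ω - μ),
            sq_abs (X t ω - μ), abs_nonneg (X s ω - μ), abs_nonneg (X t ω - μ)]
      _ = σX 0 := by
          rw [integral_div, integral_add (hgsq_int s) (hgsq_int t), hgsq s, hgsq t]
          ring
  have hσ0 : ∀ t, |σX t| ≤ σX 0 := by
    intro t
    rw [← hcov 0 t]
    calc |∫ ω, (X 0 ω - μ) * (X (0 + t) ω - μ)|
        ≤ ∫ ω, |(X 0 ω - μ) * (X (0 + t) ω - μ)| := by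
          have hni := norm_integral_le_integral_norm (μ := (ℙ : Measure Ω))
            (fun ω => (X 0 ω - μ) * (X (0 + t) ω - μ))
          simp only [Real.norm_eq_abs] at hni
          exact hni
      _ ≤ σX 0 := habs 0 (0 + t)
  -- second moments of X
  have hXsq_int : ∀ s, Integrable (fun ω => X s ω ^ 2) := fun s => (hX2 s).integrable_sq
  have hXsq : ∀ s, ∫ ω, X s ω ^ 2 = σX 0 + μ ^ 2 := by
    intro s
    have hint2 : Integrable (fun ω => 2 * μ * X s ω - μ ^ 2) :=
      ((hXint s).const_mul _).sub (integrable_const _)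
    calc ∫ ω, X s ω ^ 2
        = ∫ ω, ((X s ω - μ) ^ 2 + (2 * μ * X s ω - μ ^ 2)) := by
          congr 1; funext ω; ring
      _ = σX 0 + ∫ ω, (2 * μ * X s ω - μ ^ 2) := by
          rw [integral_add (hgsq_int s) hint2, hgsq s]
      _ = σX 0 + (2 * μ * μ - μ ^ 2) := by
          rw [integral_sub ((hXint s).const_mul _) (integrable_const _),
            integral_const_mul, hmean s, integral_const]
          simp
      _ = σX 0 + μ ^ 2 := by ring
  have hC1 : ∀ s, ∫ ω, |X s ω| ≤ (σX 0 + μ ^ 2 + 1) / 2 := by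
    intro s
    have hmaj : Integrable (fun ω => (X s ω ^ 2 + 1) / 2) :=
      ((hXsq_int s).add (integrable_const 1)).div_const 2
    calc ∫ ω, |X s ω| ≤ ∫ ω, (X s ω ^ 2 + 1) / 2 := by
          refine integral_mono (hXint s).abs hmaj fun ω => ?_
          nlinarith [sq_nonneg (|X s ω| - 1), sq_abs (X s ω), abs_nonneg (X s ω)]
      _ = (σX 0 + μ ^ 2 + 1) / 2 := by
          rw [integral_div, integral_add (hXsq_int s) (integrable_const 1),
            hXsq s, integral_const]
          simp
  -- independence of functions of X and functions of Δ
  have hIndGen : ∀ {α β : Type} [MeasurableSpace α] [MeasurableSpace β]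
      (φ : (ℕ → ℝ) → α) (ψ : (ℕ → ℕ) → β), Measurable φ → Measurable ψ →
      IndepFun (fun ω => φ (fun m => X m ω)) (fun ω => ψ (fun m => Δ m ω)) ℙ := by
    intro α β _ _ φ ψ hφ hψ
    exact hindep.comp hφ hψ
  -- Part 1
  have part1 : ∀ n, ∫ ω, Y n ω = μ := by
    intro n
    have hWind : ∀ s : ℕ, IndepFun (X s) (T n) ℙ := by
      intro s
      have hψ : Measurable (fun d : ℕ → ℕ => ∑ j ∈ Finset.range n, d j) :=
        Finset.measurable_sum _ fun j _ => measurable_pi_apply j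
      have hbase := hIndGen (fun x : ℕ → ℝ => x s)
        (fun d : ℕ → ℕ => ∑ j ∈ Finset.range n, d j) (measurable_pi_apply s) hψ
      have hTeq : (fun ω => ∑ j ∈ Finset.range n, Δ j ω) = T n :=
        funext fun ω => (hT n ω).symm
      rw [hTeq] at hbase
      exact hbase
    have hkey := aux_key (T n) (hTm n) (fun s => X s) hXmeas hXint hWind
      ((σX 0 + μ ^ 2 + 1) / 2) hC1
    have htsum1 : ∑' s : ℕ, (ℙ ((T n) ⁻¹' {s})).toReal = 1 := by
      have hdisj : Pairwise (Function.onFun Disjoint (fun s => (T n) ⁻¹' {s})) := by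
        intro i j hij
        refine Set.disjoint_left.2 fun ω hi hj => hij ?_
        have h1 : T n ω = i := hi
        have h2 : T n ω = j := hj
        rw [← h1, h2]
      have hAm : ∀ s : ℕ, MeasurableSet ((T n) ⁻¹' {s}) :=
        fun s => hTm n (measurableSet_singleton s)
      have h1 : ∑' s : ℕ, ℙ ((T n) ⁻¹' {s}) = 1 := by
        rw [← measure_iUnion hdisj hAm]
        have : (⋃ s : ℕ, (T n) ⁻¹' {s}) = Set.univ := by ext ω; simp
        rw [this, measure_univ]
      rw [← ENNReal.tsum_toReal_eq fun s => measure_ne_top _ _, h1]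
      simp
    calc ∫ ω, Y n ω = ∫ ω, X (T n ω) ω := by
          congr 1; funext ω; exact hY n ω
      _ = ∑' s : ℕ, (∫ ω, X s ω) * (ℙ ((T n) ⁻¹' {s})).toReal := hkey
      _ = ∑' s : ℕ, μ * (ℙ ((T n) ⁻¹' {s})).toReal :=
          tsum_congr fun s => by rw [hmean s]
      _ = μ * ∑' s : ℕ, (ℙ ((T n) ⁻¹' {s})).toReal := tsum_mul_left
      _ = μ := by rw [htsum1, mul_one]
  -- Part 3 (holds for all h)
  have part3 : ∀ h, ∫ ω, σX (T h ω) =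
      ∑' j : ℕ, σX j * (((ℙ : Measure Ω).map (T h)) {j}).toReal :=
    fun h => aux_discrete (T h) (hTm h) σX (σX 0) hσ0
  -- Part 2
  have part2 : ∀ n h, ∫ ω, (Y n ω - μ) * (Y (n + h) ω - μ) = ∫ ω, σX (T h ω) := by
    intro n h
    have hTnD0 : ∀ ω, T (n + h) ω = T n ω + ∑ j ∈ Finset.Ico n (n + h), Δ j ω := by
      intro ω
      rw [hT (n + h) ω, hT n ω]
      simp only [Finset.range_eq_Ico]
      exact (Finset.sum_Ico_consecutive _ (Nat.zero_le n) (Nat.le_add_right n h)).symm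
    set D : Ω → ℕ := fun ω => ∑ j ∈ Finset.Ico n (n + h), Δ j ω with hD
    have hDm : Measurable D := Finset.measurable_sum _ fun j _ => hΔmeas j
    have hTnD : ∀ ω, T (n + h) ω = T n ω + D ω := hTnD0
    set N : Ω → ℕ × ℕ := fun ω => (D ω, T n ω) with hN
    have hNm : Measurable N := hDm.prodMk (hTm n)
    set W : ℕ × ℕ → Ω → ℝ :=
      fun p ω => (X p.2 ω - μ) * (X (p.2 + p.1) ω - μ) with hW
    have hWm : ∀ p, Measurable (W p) := fun p =>
      ((hXmeas p.2).sub measurable_const).mul ((hXmeas (p.2 + p.1)).sub measurable_const)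
    have hWi : ∀ p, Integrable (W p) := fun p => hprod_int p.2 (p.2 + p.1)
    have hWC : ∀ p, ∫ ω, |W p ω| ≤ σX 0 := fun p => habs p.2 (p.2 + p.1)
    have hWval : ∀ p, ∫ ω, W p ω = σX p.1 := fun p => hcov p.2 p.1
    have hWind : ∀ p, IndepFun (W p) N ℙ := by
      intro p
      have hφ : Measurable (fun x : ℕ → ℝ => (x p.2 - μ) * (x (p.2 + p.1) - μ)) :=
        ((measurable_pi_apply _).sub measurable_const).mul
          ((measurable_pi_apply _).sub measurable_const)
      have hψ : Measurable (fun d : ℕ → ℕ =>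
          ((∑ j ∈ Finset.Ico n (n + h), d j), ∑ j ∈ Finset.range n, d j)) :=
        (Finset.measurable_sum _ fun j _ => measurable_pi_apply j).prodMk
          (Finset.measurable_sum _ fun j _ => measurable_pi_apply j)
      have hbase := hIndGen _ _ hφ hψ
      have hNe : (fun ω => ((∑ j ∈ Finset.Ico n (n + h), Δ j ω),
          ∑ j ∈ Finset.range n, Δ j ω)) = N := by
        funext ω
        rw [hN]
        exact Prod.ext rfl (hT n ω).symm
      rw [hNe] at hbase
      exact hbase
    have hkey := aux_key N hNm W hWm hWi hWind (σX 0) hWC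
    -- pointwise identification of the integrand
    have hpt : (fun ω => (Y n ω - μ) * (Y (n + h) ω - μ)) = fun ω => W (N ω) ω := by
      funext ω
      rw [hY n ω, hY (n + h) ω, hTnD ω]
    -- summability facts
    have hdisjN : Pairwise (Function.onFun Disjoint (fun p : ℕ × ℕ => N ⁻¹' {p})) := by
      intro i j hij
      refine Set.disjoint_left.2 fun ω hi hj => hij ?_
      have h1 : N ω = i := hi
      have h2 : N ω = j := hj
      rw [← h1, h2]
    have hmeasN : ∀ p : ℕ × ℕ, MeasurableSet (N ⁻¹' {p}) :=
      fun p => hNm (measurableSet_singleton p)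
    have hm_summ : Summable (fun p : ℕ × ℕ => (ℙ (N ⁻¹' {p})).toReal) := by
      apply ENNReal.summable_toReal
      rw [← measure_iUnion hdisjN hmeasN]
      exact measure_ne_top _ _
    have hf_summ : Summable (fun p : ℕ × ℕ => σX p.1 * (ℙ (N ⁻¹' {p})).toReal) := by
      rw [← summable_abs_iff]
      refine Summable.of_nonneg_of_le (fun p => abs_nonneg _) (fun p => ?_)
        (hm_summ.mul_left (σX 0))
      rw [abs_mul, abs_of_nonneg ENNReal.toReal_nonneg]
      exact mul_le_mul_of_nonneg_right (hσ0 p.1) ENNReal.toReal_nonneg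
    -- marginalization over the second coordinate
    have hfiber : ∀ t : ℕ, ∑' s : ℕ, (ℙ (N ⁻¹' {(t, s)})).toReal
        = (ℙ (D ⁻¹' {t})).toReal := by
      intro t
      have hdisj2 : Pairwise (Function.onFun Disjoint (fun s : ℕ => N ⁻¹' {(t, s)})) := by
        intro i j hij
        refine Set.disjoint_left.2 fun ω hi hj => hij ?_
        have h1 : N ω = (t, i) := hi
        have h2 : N ω = (t, j) := hj
        have h3 := h1.symm.trans h2
        exact (Prod.ext_iff.1 h3).2
      have hU : D ⁻¹' {t} = ⋃ s : ℕ, N ⁻¹' {(t, s)} := by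
        ext ω
        simp only [Set.mem_preimage, Set.mem_singleton_iff, Set.mem_iUnion, hN,
          Prod.mk.injEq]
        constructor
        · intro hωt; exact ⟨T n ω, hωt, rfl⟩
        · rintro ⟨s, hs, _⟩; exact hs
      rw [hU, measure_iUnion hdisj2 (fun s => hmeasN (t, s)),
        ENNReal.tsum_toReal_eq fun s => measure_ne_top _ _]
    -- law identification
    have hlaw := aux_law Δ hΔmeas hΔindep hΔid h n
    have hDt : ∀ t : ℕ, ℙ (D ⁻¹' {t}) = ((ℙ : Measure Ω).map (T h)) {t} := by
      intro t
      have h1 : ((ℙ : Measure Ω).map D) {t}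
          = ((ℙ : Measure Ω).map (fun ω => ∑ j ∈ Finset.range h, Δ j ω)) {t} := by
        rw [hD, hlaw]
      rw [Measure.map_apply hDm (measurableSet_singleton t)] at h1
      have hTh : (fun ω => ∑ j ∈ Finset.range h, Δ j ω) = T h :=
        funext fun ω => (hT h ω).symm
      rw [hTh] at h1
      exact h1
    calc ∫ ω, (Y n ω - μ) * (Y (n + h) ω - μ)
        = ∫ ω, W (N ω) ω := by rw [hpt]
      _ = ∑' p : ℕ × ℕ, (∫ ω, W p ω) * (ℙ (N ⁻¹' {p})).toReal := hkey
      _ = ∑' p : ℕ × ℕ, σX p.1 * (ℙ (N ⁻¹' {p})).toReal :=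
          tsum_congr fun p => by rw [hWval p]
      _ = ∑' t : ℕ, ∑' s : ℕ, σX (t, s).1 * (ℙ (N ⁻¹' {(t, s)})).toReal :=
          Summable.tsum_prod' hf_summ fun t =>
            (hf_summ.comp_injective (Prod.mk_right_injective t))
      _ = ∑' t : ℕ, σX t * (ℙ (D ⁻¹' {t})).toReal := by
          refine tsum_congr fun t => ?_
          rw [← hfiber t, ← tsum_mul_left]
      _ = ∑' t : ℕ, σX t * (((ℙ : Measure Ω).map (T h)) {t}).toReal := by
          refine tsum_congr fun t => ?_
          rw [hDt t]
      _ = ∫ ω, σX (T h ω) := (part3 h).symm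
  exact ⟨part1, part2, fun h _ => part3 h⟩
end

section
/- Let p ≥ 1. If Σ_h |σ_X(h)|^p < ∞, then Σ_h |σ_Y(h)|^p < ∞, where σ_Y(h) = E[σ_X(T_h)]. -/
open MeasureTheory ProbabilityTheory Real

lemma convexOn_abs_rpow {p : ℝ} (hp : 1 ≤ p) :
    ConvexOn ℝ Set.univ (fun x : ℝ => |x| ^ p) := by
  have himg : (fun x : ℝ => |x|) '' Set.univ = Set.Ici 0 := by
    ext y
    simp only [Set.image_univ, Set.mem_range, Set.mem_Ici]
    constructor
    · rintro ⟨x, rfl⟩; exact abs_nonneg x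
    · intro hy; exact ⟨y, abs_of_nonneg hy⟩
  have hg : ConvexOn ℝ ((fun x : ℝ => |x|) '' Set.univ) (fun x : ℝ => x ^ p) := by
    rw [himg]; exact convexOn_rpow hp
  have hmono : MonotoneOn (fun x : ℝ => x ^ p) ((fun x : ℝ => |x|) '' Set.univ) := by
    rw [himg]
    exact fun x hx y _ hxy => Real.rpow_le_rpow hx hxy (by linarith)
  have habs : ConvexOn ℝ Set.univ (fun x : ℝ => |x|) := by
    exact convexOn_univ_norm (E := ℝ)
  exact ConvexOn.comp hg habs hmono

/-- If `∑ |σ_X(h)|^p < ∞` for some `p ≥ 1`, then `∑ |σ_Y(h)|^p < ∞`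
where `σ_Y(h) = E[σ_X(T_h)]` and `T` is a random walk with i.i.d. positive integer
increments. -/
theorem summable_abs_pow_sampled_cov
    {Ω : Type*} [MeasureSpace Ω] [IsProbabilityMeasure (ℙ : Measure Ω)]
    (σX : ℕ → ℝ) (Δ : ℕ → Ω → ℕ)
    (hΔmeas : ∀ j, Measurable (Δ j))
    (hΔpos : ∀ j ω, 1 ≤ Δ j ω)
    (hΔindep : iIndepFun Δ)
    (hΔid : ∀ i j, IdentDistrib (Δ i) (Δ j))
    (T : ℕ → Ω → ℕ) (hT : ∀ n ω, T n ω = ∑ j ∈ Finset.range n, Δ j ω)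
    (σY : ℕ → ℝ) (hσY : ∀ h, σY h = ∫ ω, σX (T h ω))
    (p : ℝ) (hp : 1 ≤ p)
    (hsum : Summable (fun h : ℕ => |σX h| ^ p)) :
    Summable (fun h : ℕ => |σY h| ^ p) := by
  have hp0 : (0:ℝ) < p := by linarith
  set C : ℝ := ∑' n, |σX n| ^ p with hC
  have hnn : ∀ n, 0 ≤ |σX n| ^ p := fun n => Real.rpow_nonneg (abs_nonneg _) p
  -- bound on |σX|
  have hCle : ∀ n, |σX n| ^ p ≤ C := fun n => Summable.le_tsum hsum n (fun m _ => hnn m)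
  have hM : ∀ n, |σX n| ≤ C ^ (1/p) := by
    intro n
    have := Real.rpow_le_rpow (hnn n) (hCle n) (le_of_lt (by positivity : (0:ℝ) < 1/p))
    rwa [← Real.rpow_mul (abs_nonneg _), mul_one_div, div_self (ne_of_gt hp0),
      Real.rpow_one] at this
  -- measurability of T h
  have hTmeas : ∀ h, Measurable (T h) := by
    intro h
    have : T h = fun ω => ∑ j ∈ Finset.range h, Δ j ω := funext fun ω => hT h ω
    rw [this]
    exact Finset.measurable_sum _ fun j _ => hΔmeas j
  have hfmeas : ∀ h, Measurable (fun ω => σX (T h ω)) :=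
    fun h => measurable_from_top.comp (hTmeas h)
  have hfint : ∀ h, Integrable (fun ω => σX (T h ω)) := by
    intro h
    refine (integrable_const (C ^ (1/p))).mono' (hfmeas h).aestronglyMeasurable ?_
    filter_upwards with ω
    simpa [Real.norm_eq_abs] using hM (T h ω)
  have hgint : ∀ h, Integrable (fun ω => |σX (T h ω)| ^ p) := by
    intro h
    refine (integrable_const C).mono' ?_ ?_
    · exact ((measurable_from_top (f := fun n : ℕ => |σX n| ^ p)).comp
        (hTmeas h)).aestronglyMeasurable
    · filter_upwards with ω
      rw [Real.norm_eq_abs, abs_of_nonneg (hnn _)]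
      exact hCle _
  -- Jensen
  have hJensen : ∀ h, |σY h| ^ p ≤ ∫ ω, |σX (T h ω)| ^ p := by
    intro h
    rw [hσY h]
    exact (convexOn_abs_rpow hp).map_integral_le
      ((continuous_abs.rpow_const (fun x => Or.inr (le_of_lt hp0))).continuousOn)
      isClosed_univ (Filter.Eventually.of_forall fun ω => Set.mem_univ _)
      (hfint h) (hgint h)
  -- strict monotonicity of T in h
  have hTmono : ∀ ω, StrictMono (fun h => T h ω) := by
    intro ω
    apply strictMono_nat_of_lt_succ
    intro h
    simp only [hT]
    rw [Finset.sum_range_succ]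
    have := hΔpos h ω
    omega
  -- pointwise bound on partial sums
  have hpt : ∀ (N : ℕ) (ω : Ω), ∑ h ∈ Finset.range N, |σX (T h ω)| ^ p ≤ C := by
    intro N ω
    have hinj : Set.InjOn (fun h => T h ω) (Finset.range N) :=
      ((hTmono ω).injective).injOn
    calc ∑ h ∈ Finset.range N, |σX (T h ω)| ^ p
        = ∑ n ∈ (Finset.range N).image (fun h => T h ω), |σX n| ^ p :=
          (Finset.sum_image (f := fun n => |σX n| ^ p) (g := fun h => T h ω) (fun a ha b hb hab => hinj (Finset.mem_coe.mpr ha) (Finset.mem_coe.mpr hb) hab)).symm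
      _ ≤ C := Summable.sum_le_tsum _ (fun n _ => hnn n) hsum
  -- conclude
  apply summable_of_sum_range_le (c := C)
    (fun h => Real.rpow_nonneg (abs_nonneg _) p)
  intro N
  calc ∑ h ∈ Finset.range N, |σY h| ^ p
      ≤ ∑ h ∈ Finset.range N, ∫ ω, |σX (T h ω)| ^ p :=
        Finset.sum_le_sum fun h _ => hJensen h
    _ = ∫ ω, ∑ h ∈ Finset.range N, |σX (T h ω)| ^ p :=
        (integral_finset_sum _ (fun h _ => hgint h)).symm
    _ ≤ ∫ (_ : Ω), C := integral_mono (integrable_finset_sum _ fun h _ => hgint h)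
        (integrable_const C) (fun ω => hpt N ω)
    _ = C := by simp
end

section
/- Suppose σ_X(h) = h^{-α} L(h) with 0 < α < 1 and L slowly varying at infinity and ultimately monotone. If E[T_1] < ∞, then σ_Y(h) = E[σ_X(T_h)] satisfies σ_Y(h) ~ (E[T_1])^{-α} h^{-α} L(h) as h → ∞. -/
open MeasureTheory ProbabilityTheory Real Filter Topology


lemma aux_potter (L : ℝ → ℝ) {δ : ℝ} (hδ : 0 < δ) {X₀ : ℝ} (hX₀ : 1 ≤ X₀)
    (hpos : ∀ x, X₀ ≤ x → 0 < L x) (hmono : MonotoneOn L (Set.Ici X₀))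
    (hdbl : ∀ x, X₀ ≤ x → L (2 * x) ≤ 2 ^ δ * L x) :
    ∀ t h : ℝ, X₀ ≤ h → h ≤ t → L t ≤ 2 ^ δ * (t / h) ^ δ * L h := by
  have h2δ : (0:ℝ) < 2 ^ δ := Real.rpow_pos_of_pos two_pos δ
  have iter : ∀ k : ℕ, ∀ x, X₀ ≤ x → L (2 ^ k * x) ≤ ((2:ℝ) ^ δ) ^ k * L x := by
    intro k
    induction k with
    | zero => intro x hx; simp
    | succ n ih =>
      intro x hx
      have hx0 : 0 < x := lt_of_lt_of_le one_pos (hX₀.trans hx)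
      have h1 : X₀ ≤ 2 ^ n * x := le_trans hx (le_mul_of_one_le_left hx0.le (one_le_pow₀ one_le_two))
      calc L (2 ^ (n + 1) * x) = L (2 * (2 ^ n * x)) := by ring_nf
        _ ≤ 2 ^ δ * L (2 ^ n * x) := hdbl _ h1
        _ ≤ 2 ^ δ * (((2:ℝ) ^ δ) ^ n * L x) := by
            exact mul_le_mul_of_nonneg_left (ih x hx) h2δ.le
        _ = ((2:ℝ) ^ δ) ^ (n + 1) * L x := by ring
  intro t h hh ht
  have hh0 : 0 < h := lt_of_lt_of_le one_pos (hX₀.trans hh)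
  have hr1 : 1 ≤ t / h := (one_le_div hh0).2 ht
  have hr0 : 0 < t / h := lt_of_lt_of_le one_pos hr1
  have hlogb : 0 ≤ Real.logb 2 (t / h) := Real.logb_nonneg one_lt_two hr1
  set k := ⌈Real.logb 2 (t / h)⌉₊ with hk
  have h2k : t / h ≤ (2:ℝ) ^ k := by
    have := Real.rpow_le_rpow_of_exponent_le one_le_two (Nat.le_ceil (Real.logb 2 (t / h)))
    rwa [Real.rpow_logb two_pos (by norm_num) hr0, Real.rpow_natCast] at this
  have h2k' : (2:ℝ) ^ k ≤ 2 * (t / h) := by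
    have hk2 : (k : ℝ) ≤ Real.logb 2 (t / h) + 1 := (Nat.ceil_lt_add_one hlogb).le
    have := Real.rpow_le_rpow_of_exponent_le one_le_two hk2
    rwa [Real.rpow_natCast, Real.rpow_add two_pos, Real.rpow_logb two_pos (by norm_num) hr0,
      Real.rpow_one, mul_comm] at this
  have ht2 : t ≤ 2 ^ k * h := by
    have := mul_le_mul_of_nonneg_right h2k hh0.le
    rwa [div_mul_cancel₀ _ hh0.ne'] at this
  have hpk : ((2:ℝ) ^ δ) ^ k ≤ 2 ^ δ * (t / h) ^ δ := by
    have e1 : ((2:ℝ) ^ δ) ^ k = ((2:ℝ) ^ k) ^ δ := by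
      rw [← Real.rpow_natCast (2 ^ δ) k, ← Real.rpow_natCast (2:ℝ) k,
        ← Real.rpow_mul (by norm_num), ← Real.rpow_mul (by norm_num), mul_comm]
    rw [e1, ← Real.mul_rpow (by norm_num) hr0.le]
    exact Real.rpow_le_rpow (by positivity) h2k' hδ.le
  calc L t ≤ L (2 ^ k * h) := by
        refine hmono (Set.mem_Ici.2 (hh.trans ht)) (Set.mem_Ici.2 ?_) ht2
        exact hh.trans (le_mul_of_one_le_left hh0.le (one_le_pow₀ one_le_two))
    _ ≤ ((2:ℝ) ^ δ) ^ k * L h := iter k h hh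
    _ ≤ 2 ^ δ * (t / h) ^ δ * L h := mul_le_mul_of_nonneg_right hpk (hpos h hh).le

lemma aux_ratio {a b La Lb : ℝ} (ha : 0 < a) (hb : 0 < b) (hLb : Lb ≠ 0) (α : ℝ) :
    (a ^ (-α) * La) / (b ^ (-α) * Lb) = (a / b) ^ (-α) * (La / Lb) := by
  have hsplit : (a / b) ^ (-α) * b ^ (-α) = a ^ (-α) := by
    rw [← Real.mul_rpow (div_nonneg ha.le hb.le) hb.le, div_mul_cancel₀ _ hb.ne']
  have hbne : b ^ (-α) ≠ 0 := (Real.rpow_pos_of_pos hb _).ne'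
  rw [← hsplit]
  field_simp

/-- If `σ_X(h) = h^{-α} L(h)` with `0 < α < 1`, `L` slowly varying at infinity and
ultimately monotone, and the sampling increments have finite mean `E[T₁] < ∞`, then
`σ_Y(h) = E[σ_X(T_h)] ∼ (E[T₁])^{-α} h^{-α} L(h)` as `h → ∞`. -/
theorem sampled_cov_equivalent_finite_mean
    {Ω : Type*} [MeasureSpace Ω] [IsProbabilityMeasure (ℙ : Measure Ω)]
    (α : ℝ) (hα0 : 0 < α) (hα1 : α < 1)
    (L : ℝ → ℝ) (hLpos : ∀ x, 0 < x → 0 < L x)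
    (hLslow : ∀ c : ℝ, 0 < c → Tendsto (fun x : ℝ => L (c * x) / L x) atTop (nhds 1))
    (hLmono : ∃ M : ℝ, MonotoneOn L (Set.Ici M) ∨ AntitoneOn L (Set.Ici M))
    (σX : ℕ → ℝ) (hσX : ∀ h : ℕ, 1 ≤ h → σX h = (h : ℝ) ^ (-α) * L h)
    (Δ : ℕ → Ω → ℕ)
    (hΔmeas : ∀ j, Measurable (Δ j))
    (hΔpos : ∀ j ω, 1 ≤ Δ j ω)
    (hΔindep : iIndepFun Δ)
    (hΔid : ∀ i j, IdentDistrib (Δ i) (Δ j))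
    (hΔint : Integrable (fun ω => (Δ 0 ω : ℝ)))
    (T : ℕ → Ω → ℕ) (hT : ∀ n ω, T n ω = ∑ j ∈ Finset.range n, Δ j ω)
    (σY : ℕ → ℝ) (hσY : ∀ h, σY h = ∫ ω, σX (T h ω)) :
    Tendsto (fun h : ℕ => σY h / ((h : ℝ) ^ (-α) * L h)) atTop
      (nhds ((∫ ω, (Δ 0 ω : ℝ)) ^ (-α))) := by
  classical
  set μ := ∫ ω, (Δ 0 ω : ℝ) with hμdef
  have hcastmeas : Measurable (fun n : ℕ => (n : ℝ)) := measurable_from_top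
  have hμ1 : (1 : ℝ) ≤ μ := by
    have h1 : ∫ ω, (1 : ℝ) ≤ ∫ ω, (Δ 0 ω : ℝ) :=
      integral_mono (integrable_const 1) hΔint
        (fun ω => by simpa using (show (1:ℝ) ≤ Δ 0 ω by exact_mod_cast hΔpos 0 ω))
    simpa using h1
  have hμ0 : (0 : ℝ) < μ := lt_of_lt_of_le one_pos hμ1
  -- SLLN
  have hslln : ∀ᵐ ω, Tendsto (fun h : ℕ => (T h ω : ℝ) / h) atTop (𝓝 μ) := by
    have hind : Pairwise (Function.onFun (IndepFun · · ℙ) fun i ω => (Δ i ω : ℝ)) := fun i j hij =>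
      (hΔindep.indepFun hij).comp hcastmeas hcastmeas
    have hid : ∀ i, IdentDistrib (fun ω => (Δ i ω : ℝ)) (fun ω => (Δ 0 ω : ℝ)) :=
      fun i => (hΔid i 0).comp hcastmeas
    have hint0 : Integrable (fun ω => (Δ 0 ω : ℝ)) := hΔint
    have := strong_law_ae_real (fun i ω => (Δ i ω : ℝ)) hint0 hind hid
    filter_upwards [this] with ω hω
    have heq : (fun h : ℕ => (T h ω : ℝ) / h)
        = fun n : ℕ => (∑ i ∈ Finset.range n, (Δ i ω : ℝ)) / n := by
      funext n; rw [hT]; push_cast; ring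
    rw [heq]
    exact hω
  -- T_h ≥ h
  have hTge : ∀ h ω, h ≤ T h ω := by
    intro h ω
    rw [hT]
    calc h = ∑ _j ∈ Finset.range h, 1 := by simp
      _ ≤ ∑ j ∈ Finset.range h, Δ j ω := Finset.sum_le_sum fun j _ => hΔpos j ω
  -- Potter-type bound
  obtain ⟨C, h₀, hC1, hh₀1, hkey⟩ : ∃ C : ℝ, ∃ h₀ : ℕ, 1 ≤ C ∧ 1 ≤ h₀ ∧
      ∀ h t : ℕ, h₀ ≤ h → h ≤ t → L t ≤ C * ((t : ℝ) / (h : ℝ)) ^ (α / 2) * L h := by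
    obtain ⟨M, hM | hM⟩ := hLmono
    · have h1 : (1 : ℝ) < 2 ^ (α / 2) :=
        (Real.one_lt_rpow_iff_of_pos two_pos).2 (Or.inl ⟨one_lt_two, by linarith⟩)
      obtain ⟨X₁, hX₁⟩ := eventually_atTop.1 ((hLslow 2 two_pos).eventually_lt_const h1)
      set X₀ := max (max M X₁) 1 with hX₀def
      have hX₀1 : (1 : ℝ) ≤ X₀ := le_max_right _ _
      have hpos' : ∀ x, X₀ ≤ x → 0 < L x := fun x hx =>
        hLpos x (lt_of_lt_of_le one_pos (hX₀1.trans hx))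
      have hdbl : ∀ x, X₀ ≤ x → L (2 * x) ≤ 2 ^ (α / 2) * L x := by
        intro x hx
        have h2 := hX₁ x (le_trans (le_trans (le_max_right _ _) (le_max_left _ _)) hx)
        rw [div_lt_iff₀ (hpos' x hx)] at h2
        nlinarith [hpos' x hx]
      have hmono' : MonotoneOn L (Set.Ici X₀) :=
        hM.mono (Set.Ici_subset_Ici.2 ((le_max_left _ _).trans (le_max_left _ _)))
      have key := aux_potter L (half_pos hα0) hX₀1 hpos' hmono' hdbl
      refine ⟨2 ^ (α / 2), ⌈X₀⌉₊, h1.le, ?_, fun h t hh ht => ?_⟩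
      · exact Nat.one_le_iff_ne_zero.2 (Nat.ceil_pos.2 (lt_of_lt_of_le one_pos hX₀1)).ne'
      · have hXh : X₀ ≤ (h : ℝ) := (Nat.le_ceil X₀).trans (Nat.cast_le.2 hh)
        exact key t h hXh (Nat.cast_le.2 ht)
    · refine ⟨1, ⌈max M 1⌉₊, le_refl 1, ?_, fun h t hh ht => ?_⟩
      · exact Nat.one_le_iff_ne_zero.2 (Nat.ceil_pos.2 (lt_of_lt_of_le one_pos (le_max_right _ _))).ne'
      · have hXh : max M 1 ≤ (h : ℝ) := (Nat.le_ceil _).trans (Nat.cast_le.2 hh)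
        have hMh : M ≤ (h : ℝ) := (le_max_left _ _).trans hXh
        have hht : (h : ℝ) ≤ (t : ℝ) := Nat.cast_le.2 ht
        have h1 : L t ≤ L h := hM (Set.mem_Ici.2 hMh) (Set.mem_Ici.2 (hMh.trans hht)) hht
        have h2 : (1 : ℝ) ≤ ((t : ℝ) / (h : ℝ)) ^ (α / 2) := by
          have hh0 : (0 : ℝ) < (h : ℝ) := lt_of_lt_of_le one_pos ((le_max_right M 1).trans hXh)
          have : (1 : ℝ) ≤ (t : ℝ) / (h : ℝ) := (one_le_div hh0).2 hht
          calc (1 : ℝ) = 1 ^ (α / 2) := (Real.one_rpow _).symm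
            _ ≤ ((t : ℝ) / (h : ℝ)) ^ (α / 2) := Real.rpow_le_rpow zero_le_one this (by linarith)
        have hLh : 0 < L h :=
          hLpos _ (lt_of_lt_of_le one_pos ((le_max_right M 1).trans hXh))
        nlinarith
  -- the normalized integrand
  set F : ℕ → Ω → ℝ := fun h ω => σX (T h ω) / ((h : ℝ) ^ (-α) * L h) with hF
  have hgoal_eq : ∀ h : ℕ, σY h / ((h : ℝ) ^ (-α) * L h) = ∫ ω, F h ω := by
    intro h
    rw [hσY, hF]
    exact (integral_div _ _).symm
  simp only [hgoal_eq]
  -- the key rewrite for F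
  have hFeq : ∀ (h : ℕ) (ω : Ω), 1 ≤ h →
      F h ω = ((T h ω : ℝ) / h) ^ (-α) * (L (T h ω) / L h) := by
    intro h ω h1
    have hth : h ≤ T h ω := hTge h ω
    have ht1 : 1 ≤ T h ω := le_trans h1 hth
    have hb0 : (0 : ℝ) < (h : ℝ) := by exact_mod_cast h1
    have ha0 : (0 : ℝ) < (T h ω : ℝ) := by exact_mod_cast ht1
    have hLb : L h ≠ 0 := (hLpos _ hb0).ne'
    rw [hF]
    simp only
    rw [hσX _ ht1, aux_ratio ha0 hb0 hLb α]
  -- apply dominated convergence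
  have main := tendsto_integral_filter_of_dominated_convergence
    (μ := (ℙ : Measure Ω)) (F := F) (f := fun _ : Ω => μ ^ (-α)) (l := atTop)
    (fun _ : Ω => C)
    (by
      refine Eventually.of_forall fun h => ?_
      have hTmeas : Measurable (T h) := by
        have he : T h = fun ω => ∑ j ∈ Finset.range h, Δ j ω := funext (hT h)
        rw [he]
        exact Finset.measurable_sum _ fun j _ => hΔmeas j
      have : Measurable (F h) := by
        have : Measurable (fun n : ℕ => σX n / ((h : ℝ) ^ (-α) * L h)) := measurable_from_top
        exact this.comp hTmeas
      exact this.aestronglyMeasurable)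
    (by
      filter_upwards [eventually_ge_atTop h₀] with h hh
      refine Eventually.of_forall fun ω => ?_
      have h1 : 1 ≤ h := le_trans hh₀1 hh
      have hth : h ≤ T h ω := hTge h ω
      have hb0 : (0 : ℝ) < (h : ℝ) := by exact_mod_cast h1
      have ha0 : (0 : ℝ) < (T h ω : ℝ) := by exact_mod_cast le_trans h1 hth
      have hr1 : (1 : ℝ) ≤ (T h ω : ℝ) / h := (one_le_div hb0).2 (Nat.cast_le.2 hth)
      have hr0 : (0 : ℝ) < (T h ω : ℝ) / h := lt_of_lt_of_le one_pos hr1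
      have hLa : 0 < L (T h ω) := hLpos _ ha0
      have hLb : 0 < L h := hLpos _ hb0
      have hFnn : 0 ≤ F h ω := by
        rw [hFeq h ω h1]
        positivity
      rw [Real.norm_eq_abs, abs_of_nonneg hFnn, hFeq h ω h1]
      have hk := hkey h (T h ω) hh hth
      calc ((T h ω : ℝ) / h) ^ (-α) * (L (T h ω) / L h)
          ≤ ((T h ω : ℝ) / h) ^ (-α) * (C * ((T h ω : ℝ) / h) ^ (α / 2)) := by
            refine mul_le_mul_of_nonneg_left ?_ (Real.rpow_nonneg hr0.le _)
            rw [div_le_iff₀ hLb]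
            linarith
        _ = C * (((T h ω : ℝ) / h) ^ (-α) * ((T h ω : ℝ) / h) ^ (α / 2)) := by ring
        _ = C * ((T h ω : ℝ) / h) ^ (-α + α / 2) := by
            rw [← Real.rpow_add hr0]
        _ ≤ C * 1 := by
            refine mul_le_mul_of_nonneg_left ?_ (by linarith)
            exact Real.rpow_le_one_of_one_le_of_nonpos hr1 (by linarith)
        _ = C := mul_one C)
    (integrable_const C)
    (by
      filter_upwards [hslln] with ω hω
      -- ratio tends to 1
      have hrat : Tendsto (fun h : ℕ => L (T h ω) / L h) atTop (𝓝 1) := by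
        have hcast : Tendsto (fun h : ℕ => (h : ℝ)) atTop atTop :=
          tendsto_natCast_atTop_atTop
        have hlow : Tendsto (fun h : ℕ => L (μ / 2 * h) / L h) atTop (𝓝 1) :=
          (hLslow (μ / 2) (by linarith)).comp hcast
        have hhigh : Tendsto (fun h : ℕ => L ((μ + 1) * h) / L h) atTop (𝓝 1) :=
          (hLslow (μ + 1) (by linarith)).comp hcast
        have hE1 : ∀ᶠ h : ℕ in atTop, μ / 2 < (T h ω : ℝ) / h :=
          hω.eventually (eventually_gt_nhds (by linarith))
        have hE2 : ∀ᶠ h : ℕ in atTop, (T h ω : ℝ) / h < μ + 1 :=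
          hω.eventually (eventually_lt_nhds (lt_add_one μ))
        obtain ⟨M, hM | hM⟩ := hLmono
        · refine tendsto_of_tendsto_of_tendsto_of_le_of_le' hlow hhigh ?_ ?_
          · filter_upwards [hE1, hE2, hcast.eventually_ge_atTop (max (2 * max M 0 / μ) 1)]
              with h h1 h2 h3
            have hh0 : (0 : ℝ) < (h : ℝ) :=
              lt_of_lt_of_le one_pos ((le_max_right _ _).trans h3)
            have hLh : (0 : ℝ) < L h := hLpos _ hh0
            have harg : M ≤ μ / 2 * h := by
              have h4 := (le_max_left (2 * max M 0 / μ) 1).trans h3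
              rw [div_le_iff₀ hμ0] at h4
              have h5 : M ≤ max M 0 := le_max_left _ _
              nlinarith
            have hle : μ / 2 * h ≤ (T h ω : ℝ) := by
              rw [lt_div_iff₀ hh0] at h1
              linarith
            have hle2 : (T h ω : ℝ) ≤ (μ + 1) * h := by
              rw [div_lt_iff₀ hh0] at h2
              linarith
            have hmem1 : μ / 2 * h ∈ Set.Ici M := Set.mem_Ici.2 harg
            have hmem2 : (T h ω : ℝ) ∈ Set.Ici M := Set.mem_Ici.2 (harg.trans hle)
            have hmem3 : (μ + 1) * h ∈ Set.Ici M := Set.mem_Ici.2 (harg.trans (hle.trans hle2))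
            exact (div_le_div_iff_of_pos_right hLh).2 (hM hmem1 hmem2 hle)
          · filter_upwards [hE1, hE2, hcast.eventually_ge_atTop (max (2 * max M 0 / μ) 1)]
              with h h1 h2 h3
            have hh0 : (0 : ℝ) < (h : ℝ) :=
              lt_of_lt_of_le one_pos ((le_max_right _ _).trans h3)
            have hLh : (0 : ℝ) < L h := hLpos _ hh0
            have harg : M ≤ μ / 2 * h := by
              have h4 := (le_max_left (2 * max M 0 / μ) 1).trans h3
              rw [div_le_iff₀ hμ0] at h4
              have h5 : M ≤ max M 0 := le_max_left _ _
              nlinarith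
            have hle : μ / 2 * h ≤ (T h ω : ℝ) := by
              rw [lt_div_iff₀ hh0] at h1
              linarith
            have hle2 : (T h ω : ℝ) ≤ (μ + 1) * h := by
              rw [div_lt_iff₀ hh0] at h2
              linarith
            have hmem1 : μ / 2 * h ∈ Set.Ici M := Set.mem_Ici.2 harg
            have hmem2 : (T h ω : ℝ) ∈ Set.Ici M := Set.mem_Ici.2 (harg.trans hle)
            have hmem3 : (μ + 1) * h ∈ Set.Ici M := Set.mem_Ici.2 (harg.trans (hle.trans hle2))
            exact (div_le_div_iff_of_pos_right hLh).2 (hM hmem2 hmem3 hle2)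
        · refine tendsto_of_tendsto_of_tendsto_of_le_of_le' hhigh hlow ?_ ?_
          · filter_upwards [hE1, hE2, hcast.eventually_ge_atTop (max (2 * max M 0 / μ) 1)]
              with h h1 h2 h3
            have hh0 : (0 : ℝ) < (h : ℝ) :=
              lt_of_lt_of_le one_pos ((le_max_right _ _).trans h3)
            have hLh : (0 : ℝ) < L h := hLpos _ hh0
            have harg : M ≤ μ / 2 * h := by
              have h4 := (le_max_left (2 * max M 0 / μ) 1).trans h3
              rw [div_le_iff₀ hμ0] at h4
              have h5 : M ≤ max M 0 := le_max_left _ _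
              nlinarith
            have hle : μ / 2 * h ≤ (T h ω : ℝ) := by
              rw [lt_div_iff₀ hh0] at h1
              linarith
            have hle2 : (T h ω : ℝ) ≤ (μ + 1) * h := by
              rw [div_lt_iff₀ hh0] at h2
              linarith
            have hmem1 : μ / 2 * h ∈ Set.Ici M := Set.mem_Ici.2 harg
            have hmem2 : (T h ω : ℝ) ∈ Set.Ici M := Set.mem_Ici.2 (harg.trans hle)
            have hmem3 : (μ + 1) * h ∈ Set.Ici M := Set.mem_Ici.2 (harg.trans (hle.trans hle2))
            exact (div_le_div_iff_of_pos_right hLh).2 (hM hmem2 hmem3 hle2)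
          · filter_upwards [hE1, hE2, hcast.eventually_ge_atTop (max (2 * max M 0 / μ) 1)]
              with h h1 h2 h3
            have hh0 : (0 : ℝ) < (h : ℝ) :=
              lt_of_lt_of_le one_pos ((le_max_right _ _).trans h3)
            have hLh : (0 : ℝ) < L h := hLpos _ hh0
            have harg : M ≤ μ / 2 * h := by
              have h4 := (le_max_left (2 * max M 0 / μ) 1).trans h3
              rw [div_le_iff₀ hμ0] at h4
              have h5 : M ≤ max M 0 := le_max_left _ _
              nlinarith
            have hle : μ / 2 * h ≤ (T h ω : ℝ) := by
              rw [lt_div_iff₀ hh0] at h1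
              linarith
            have hle2 : (T h ω : ℝ) ≤ (μ + 1) * h := by
              rw [div_lt_iff₀ hh0] at h2
              linarith
            have hmem1 : μ / 2 * h ∈ Set.Ici M := Set.mem_Ici.2 harg
            have hmem2 : (T h ω : ℝ) ∈ Set.Ici M := Set.mem_Ici.2 (harg.trans hle)
            have hmem3 : (μ + 1) * h ∈ Set.Ici M := Set.mem_Ici.2 (harg.trans (hle.trans hle2))
            exact (div_le_div_iff_of_pos_right hLh).2 (hM hmem1 hmem2 hle)
      have hpow : Tendsto (fun h : ℕ => ((T h ω : ℝ) / h) ^ (-α)) atTop (𝓝 (μ ^ (-α))) :=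
        hω.rpow_const (Or.inl hμ0.ne')
      have hprod := hpow.mul hrat
      rw [mul_one] at hprod
      refine Tendsto.congr' ?_ hprod
      filter_upwards [eventually_ge_atTop 1] with h h1
      exact (hFeq h ω h1).symm)
  simpa using main
end

section
/- Assume |σ_X(h)| ≤ c h^{-α} with 0 < α < 1, and assume liminf_{x→∞} x^β P(T_1 > x) > 0 for some β ∈ (0,1). Then the sampled covariance satisfies |σ_Y(h)| ≤ C h^{-α/β} for some constant C and all large h. -/
open MeasureTheory ProbabilityTheory Real Filter
open scoped ENNReal

lemma aux_geom_dominate (α β ε : ℝ) (hα : 0 < α) (hβ : 0 < β) (hε : 0 < ε) :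
    ∃ D : ℝ, 0 < D ∧ ∀ m : ℕ,
      (2:ℝ) ^ ((m:ℝ) * α) * Real.exp (-(ε * (2:ℝ) ^ (((m:ℝ) - 2) * β)))
        ≤ D * (2:ℝ) ^ (-(m:ℝ)) := by
  set A : ℝ := (α + 1) * Real.log 2 with hA
  have hlog2 : 0 < Real.log 2 := Real.log_pos (by norm_num)
  have hApos : 0 < A := by positivity
  set c2 : ℝ := ε * β ^ 2 * (Real.log 2) ^ 2 / 4 with hc2
  have hc2pos : 0 < c2 := by positivity
  refine ⟨Real.exp (2 * A + A ^ 2 / (4 * c2)), Real.exp_pos _, fun m => ?_⟩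
  have h2 : (0:ℝ) < 2 := by norm_num
  -- rewrite everything as exponentials
  have key : (m:ℝ) * A - ε * (2:ℝ) ^ (((m:ℝ) - 2) * β) ≤ 2 * A + A ^ 2 / (4 * c2) := by
    rcases le_or_gt (m:ℝ) 2 with hm | hm
    · have h1 : 0 < ε * (2:ℝ) ^ (((m:ℝ) - 2) * β) := by positivity
      have : (m:ℝ) * A ≤ 2 * A := by nlinarith
      nlinarith [sq_nonneg A, mul_pos (by norm_num : (0:ℝ) < 4) hc2pos,
        div_nonneg (sq_nonneg A) (by positivity : (0:ℝ) ≤ 4 * c2)]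
    · set y : ℝ := ((m:ℝ) - 2) * β * Real.log 2 with hy
      have hy0 : 0 ≤ y := by
        have : (0:ℝ) ≤ (m:ℝ) - 2 := by linarith
        positivity
      have hexp : (2:ℝ) ^ (((m:ℝ) - 2) * β) = Real.exp y := by
        rw [Real.rpow_def_of_pos h2, hy]; ring_nf
      have hquad : y ^ 2 / 4 ≤ Real.exp y := by
        have h1 : 1 + y / 2 ≤ Real.exp (y / 2) := by
          have := Real.add_one_le_exp (y / 2); linarith
        have h2' : Real.exp y = Real.exp (y / 2) ^ 2 := by
          rw [sq, ← Real.exp_add]; ring_nf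
        nlinarith [Real.exp_pos (y/2)]
      have hy2 : ε * (y ^ 2 / 4) = c2 * ((m:ℝ) - 2) ^ 2 := by
        rw [hc2, hy]; ring
      have h3 : c2 * ((m:ℝ) - 2) ^ 2 ≤ ε * Real.exp y := by
        rw [← hy2]
        have := mul_le_mul_of_nonneg_left hquad hε.le
        linarith
      rw [hexp]
      have hAc : 4 * c2 * (A ^ 2 / (4 * c2)) = A ^ 2 := by field_simp
      nlinarith [sq_nonneg (2 * c2 * ((m:ℝ) - 2) - A), hc2pos, h3, hAc]
  have lhs_eq : (2:ℝ) ^ ((m:ℝ) * α) * Real.exp (-(ε * (2:ℝ) ^ (((m:ℝ) - 2) * β)))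
      = Real.exp ((m:ℝ) * α * Real.log 2 - ε * (2:ℝ) ^ (((m:ℝ) - 2) * β)) := by
    rw [Real.rpow_def_of_pos h2, ← Real.exp_add]; ring_nf
  have rhs_eq : Real.exp (2 * A + A ^ 2 / (4 * c2)) * (2:ℝ) ^ (-(m:ℝ))
      = Real.exp (2 * A + A ^ 2 / (4 * c2) + (-(m:ℝ)) * Real.log 2) := by
    rw [Real.rpow_def_of_pos h2, ← Real.exp_add]; ring_nf
  rw [lhs_eq, rhs_eq]
  apply Real.exp_le_exp.2
  have : (m:ℝ) * α * Real.log 2 = (m:ℝ) * A + (-(m:ℝ)) * Real.log 2 := by rw [hA]; ring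
  linarith [key]

lemma aux_tail_lb (β : ℝ) (hβ : 0 < β) (p : ℝ → ℝ)
    (hp0 : ∀ x, 0 ≤ p x) (hpa : ∀ x y, x ≤ y → p y ≤ p x)
    (h : 0 < liminf (fun x : ℝ => x ^ β * p x) atTop) :
    ∃ ε₀ : ℝ, 0 < ε₀ ∧ ∀ x : ℝ, 1 ≤ x → ε₀ * x ^ (-β) ≤ p x := by
  set u : ℝ → ℝ := fun x => x ^ β * p x with hu
  have hbdd : IsBoundedUnder (· ≥ ·) atTop u := by
    refine ⟨0, ?_⟩
    rw [eventually_map]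
    filter_upwards [eventually_ge_atTop (0:ℝ)] with x hx
    exact mul_nonneg (rpow_nonneg hx β) (hp0 x)
  set ε : ℝ := liminf u atTop / 2 with hε
  have hεpos : 0 < ε := by positivity
  have hev : ∀ᶠ x in atTop, ε < u x :=
    eventually_lt_of_lt_liminf (by linarith) hbdd
  obtain ⟨N1, hN1⟩ := eventually_atTop.1 hev
  set N0 : ℝ := max N1 1 with hN0
  have hN0one : (1:ℝ) ≤ N0 := le_max_right _ _
  have hN0pos : (0:ℝ) < N0 := lt_of_lt_of_le one_pos hN0one
  have htail : ∀ x : ℝ, N0 ≤ x → ε * x ^ (-β) < p x := by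
    intro x hx
    have hx1 : (1:ℝ) ≤ x := le_trans hN0one hx
    have hxpos : (0:ℝ) < x := lt_of_lt_of_le one_pos hx1
    have h1 : ε < x ^ β * p x := hN1 x (le_trans (le_max_left _ _) hx)
    have hxb : (0:ℝ) < x ^ β := rpow_pos_of_pos hxpos β
    rw [Real.rpow_neg hxpos.le]
    rw [mul_inv_lt_iff₀ hxb] at *
    · linarith [h1]
  refine ⟨min ε (ε * N0 ^ (-β)), lt_min hεpos (by positivity), fun x hx => ?_⟩
  rcases le_or_gt N0 x with hcase | hcase
  · calc min ε (ε * N0 ^ (-β)) * x ^ (-β) ≤ ε * x ^ (-β) := by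
          apply mul_le_mul_of_nonneg_right (min_le_left _ _)
          exact rpow_nonneg (by linarith) _
      _ ≤ p x := (htail x hcase).le
  · have hxb1 : x ^ (-β) ≤ 1 :=
      Real.rpow_le_one_of_one_le_of_nonpos hx (by linarith)
    calc min ε (ε * N0 ^ (-β)) * x ^ (-β) ≤ min ε (ε * N0 ^ (-β)) * 1 := by
          apply mul_le_mul_of_nonneg_left hxb1
          exact le_of_lt (lt_min hεpos (by positivity))
      _ ≤ ε * N0 ^ (-β) := by rw [mul_one]; exact min_le_right _ _
      _ ≤ p N0 := (htail N0 le_rfl).le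
      _ ≤ p x := hpa x N0 hcase.le

lemma aux_prob {Ω : Type*} [MeasureSpace Ω] [IsProbabilityMeasure (ℙ : Measure Ω)]
    (Δ : ℕ → Ω → ℕ)
    (hΔmeas : ∀ j, Measurable (Δ j))
    (hΔindep : iIndepFun Δ)
    (hΔid : ∀ i j, IdentDistrib (Δ i) (Δ j))
    (h n : ℕ) :
    ((ℙ : Measure Ω) (⋂ j ∈ Finset.range h, Δ j ⁻¹' {m | m ≤ n})).toReal
      ≤ Real.exp (-(h:ℝ) * ((ℙ : Measure Ω) {ω | (n:ℝ) < (Δ 0 ω : ℝ)}).toReal) := by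
  set s : Set Ω := {ω | (n:ℝ) < (Δ 0 ω : ℝ)} with hs
  have hs_eq : s = Δ 0 ⁻¹' {m : ℕ | (n:ℝ) < (m:ℝ)} := rfl
  have hscompl : Δ 0 ⁻¹' {m : ℕ | m ≤ n} = sᶜ := by
    ext ω
    simp [hs, Set.mem_preimage, not_lt, Nat.cast_le]
  set p : ℝ := ((ℙ : Measure Ω) s).toReal with hp
  have hp0 : 0 ≤ p := ENNReal.toReal_nonneg
  have hp1 : p ≤ 1 := by
    rw [hp]
    calc ((ℙ : Measure Ω) s).toReal ≤ (1 : ℝ≥0∞).toReal :=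
        ENNReal.toReal_mono (by simp) prob_le_one
      _ = 1 := by simp
  have hsmeas : MeasurableSet s := by
    rw [hs_eq]
    exact (hΔmeas 0) .of_discrete
  -- independence: measure of intersection is product
  have hprod : (ℙ : Measure Ω) (⋂ j ∈ Finset.range h, Δ j ⁻¹' {m | m ≤ n})
      = ∏ j ∈ Finset.range h, (ℙ : Measure Ω) (Δ j ⁻¹' {m | m ≤ n}) :=
    (iIndepFun_iff_measure_inter_preimage_eq_mul.mp hΔindep) (Finset.range h)
      (fun i _ => .of_discrete)
  have hfactor : ∀ j, (ℙ : Measure Ω) (Δ j ⁻¹' {m : ℕ | m ≤ n})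
      = (ℙ : Measure Ω) (Δ 0 ⁻¹' {m : ℕ | m ≤ n}) := fun j =>
    (hΔid j 0).measure_mem_eq .of_discrete
  have hq : (ℙ : Measure Ω) (Δ 0 ⁻¹' {m : ℕ | m ≤ n}) = 1 - (ℙ : Measure Ω) s := by
    rw [hscompl, prob_compl_eq_one_sub hsmeas]
  have hqtoReal : ((ℙ : Measure Ω) (Δ 0 ⁻¹' {m : ℕ | m ≤ n})).toReal = 1 - p := by
    rw [hq, hp, ENNReal.toReal_sub_of_le prob_le_one (by simp), ENNReal.toReal_one]
  have hmain : ((ℙ : Measure Ω) (⋂ j ∈ Finset.range h, Δ j ⁻¹' {m | m ≤ n})).toReal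
      = (1 - p) ^ h := by
    rw [hprod]
    rw [Finset.prod_congr rfl (fun j _ => hfactor j), Finset.prod_const,
      Finset.card_range, ENNReal.toReal_pow, hqtoReal]
  rw [hmain]
  have h1 : 1 - p ≤ Real.exp (-p) := by
    have := Real.add_one_le_exp (-p); linarith
  calc (1 - p) ^ h ≤ Real.exp (-p) ^ h := pow_le_pow_left₀ (by linarith) h1 h
    _ = Real.exp (-(h:ℝ) * p) := by
        rw [← Real.exp_nat_mul]; ring_nf


/-- If `|σ_X(h)| ≤ c h^{-α}` with `0 < α < 1` and the increment law has a heavy tail,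
`liminf_{x→∞} x^β P(T₁ > x) > 0` for some `β ∈ (0,1)`, then
`|σ_Y(h)| ≤ C h^{-α/β}` for some `C` and all large `h`. -/
theorem sampled_cov_decay_heavy_tail
    {Ω : Type*} [MeasureSpace Ω] [IsProbabilityMeasure (ℙ : Measure Ω)]
    (α c : ℝ) (hα0 : 0 < α) (hα1 : α < 1) (hc : 0 < c)
    (σX : ℕ → ℝ) (hσX : ∀ h : ℕ, 1 ≤ h → |σX h| ≤ c * (h : ℝ) ^ (-α))
    (Δ : ℕ → Ω → ℕ)
    (hΔmeas : ∀ j, Measurable (Δ j))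
    (hΔpos : ∀ j ω, 1 ≤ Δ j ω)
    (hΔindep : iIndepFun Δ)
    (hΔid : ∀ i j, IdentDistrib (Δ i) (Δ j))
    (β : ℝ) (hβ0 : 0 < β) (hβ1 : β < 1)
    (htail : 0 < liminf (fun x : ℝ =>
      x ^ β * ((ℙ : Measure Ω) {ω | x < (Δ 0 ω : ℝ)}).toReal) atTop)
    (T : ℕ → Ω → ℕ) (hT : ∀ n ω, T n ω = ∑ j ∈ Finset.range n, Δ j ω)
    (σY : ℕ → ℝ) (hσY : ∀ h, σY h = ∫ ω, σX (T h ω)) :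
    ∃ C : ℝ, 0 < C ∧ ∀ᶠ h : ℕ in atTop, |σY h| ≤ C * (h : ℝ) ^ (-(α / β)) := by
  classical
  -- tail probability function
  set p : ℝ → ℝ := fun x => ((ℙ : Measure Ω) {ω | x < (Δ 0 ω : ℝ)}).toReal with hpdef
  have hp0 : ∀ x, 0 ≤ p x := fun x => ENNReal.toReal_nonneg
  have hpa : ∀ x y, x ≤ y → p y ≤ p x := by
    intro x y hxy
    apply ENNReal.toReal_mono (measure_ne_top _ _)
    apply measure_mono
    intro ω hω
    exact lt_of_le_of_lt hxy hω
  obtain ⟨ε₀, hε₀, htailb⟩ := aux_tail_lb β hβ0 p hp0 hpa htail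
  obtain ⟨D, hD, hDle⟩ := aux_geom_dominate α β ε₀ hα0 hβ0 hε₀
  set C : ℝ := c * (D + 1) * (2:ℝ) ^ (α / β) with hC
  have hCpos : 0 < C := by positivity
  refine ⟨C, hCpos, ?_⟩
  filter_upwards [eventually_ge_atTop 1] with h hh
  have hhR : (1:ℝ) ≤ (h:ℝ) := by exact_mod_cast hh
  have hhpos : (0:ℝ) < (h:ℝ) := by linarith
  -- dyadic setup
  set L : ℕ := Nat.log 2 h with hLdef
  set k1 : ℕ := ⌈(L:ℝ) / β⌉₊ with hk1def
  set w : ℕ → ℝ := fun k => (2:ℝ) ^ ((k:ℝ) * (-α)) with hwdef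
  have hw0 : ∀ k, 0 ≤ w k := fun k => (rpow_pos_of_pos two_pos _).le
  set E : ℕ → Set Ω := fun n => ⋂ j ∈ Finset.range h, Δ j ⁻¹' {m | m ≤ n} with hEdef
  have hEmeas : ∀ n, MeasurableSet (E n) := by
    intro n
    exact Finset.measurableSet_biInter _ (fun j _ => (hΔmeas j) .of_discrete)
  set G : Ω → ℝ := fun ω =>
    (∑ k ∈ Finset.range k1, (E (2 ^ (k + 1) - 1)).indicator (fun _ => w k) ω) + w k1
    with hGdef
  -- rpow comparison for T ≥ 2^k
  have hrpow_le : ∀ (k t : ℕ), 2 ^ k ≤ t → (t:ℝ) ^ (-α) ≤ w k := by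
    intro k t hkt
    have ht0 : (0:ℝ) < (2:ℝ) ^ (k:ℝ) := rpow_pos_of_pos two_pos _
    have hcast : ((2:ℝ)) ^ (k:ℝ) ≤ (t:ℝ) := by
      rw [Real.rpow_natCast]
      exact_mod_cast hkt
    have := Real.rpow_le_rpow_of_nonpos ht0 hcast (neg_nonpos.2 hα0.le)
    calc (t:ℝ) ^ (-α) ≤ ((2:ℝ) ^ (k:ℝ)) ^ (-α) := this
      _ = w k := by rw [hwdef, ← Real.rpow_mul (by norm_num)]
  -- pointwise bound
  have hpw : ∀ ω, |σX (T h ω)| ≤ c * G ω := by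
    intro ω
    have hTval : T h ω = ∑ j ∈ Finset.range h, Δ j ω := hT h ω
    have hTge : h ≤ T h ω := by
      rw [hTval]
      calc h = ∑ _j ∈ Finset.range h, 1 := by simp
        _ ≤ ∑ j ∈ Finset.range h, Δ j ω :=
            Finset.sum_le_sum (fun j _ => hΔpos j ω)
    have hT1 : 1 ≤ T h ω := le_trans hh hTge
    have hbase : |σX (T h ω)| ≤ c * ((T h ω : ℝ)) ^ (-α) := hσX _ hT1
    have hsum_nonneg : 0 ≤ ∑ k ∈ Finset.range k1,
        (E (2 ^ (k + 1) - 1)).indicator (fun _ => w k) ω :=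
      Finset.sum_nonneg (fun k _ => Set.indicator_nonneg (fun _ _ => hw0 k) ω)
    have hGle : ((T h ω : ℝ)) ^ (-α) ≤ G ω := by
      rcases le_or_gt (2 ^ k1) (T h ω) with hcase | hcase
      · calc ((T h ω : ℝ)) ^ (-α) ≤ w k1 := hrpow_le k1 _ hcase
          _ ≤ G ω := by rw [hGdef]; simp only []; linarith
      · set k : ℕ := Nat.log 2 (T h ω) with hkdef
        have hTne : T h ω ≠ 0 := by omega
        have hkk1 : k < k1 := Nat.log_lt_of_lt_pow hTne hcase
        have h2k : 2 ^ k ≤ T h ω := Nat.pow_log_le_self 2 hTne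
        have h2k1 : T h ω < 2 ^ (k + 1) := Nat.lt_pow_succ_log_self (by norm_num) _
        have hmem : ω ∈ E (2 ^ (k + 1) - 1) := by
          rw [hEdef]
          simp only [Set.mem_iInter, Set.mem_preimage, Set.mem_setOf_eq]
          intro j hj
          have hΔle : Δ j ω ≤ T h ω := by
            rw [hTval]
            exact Finset.single_le_sum (f := fun i => Δ i ω)
              (fun i _ => Nat.zero_le _) hj
          omega
        have hterm : w k ≤ ∑ k' ∈ Finset.range k1,
            (E (2 ^ (k' + 1) - 1)).indicator (fun _ => w k') ω := by
          have : (E (2 ^ (k + 1) - 1)).indicator (fun _ => w k) ω = w k :=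
            Set.indicator_of_mem hmem _
          rw [← this]
          exact Finset.single_le_sum
            (f := fun k' => (E (2 ^ (k' + 1) - 1)).indicator (fun _ => w k') ω)
            (fun k' _ => Set.indicator_nonneg (fun _ _ => hw0 k') ω)
            (Finset.mem_range.2 hkk1)
        calc ((T h ω : ℝ)) ^ (-α) ≤ w k := hrpow_le k _ h2k
          _ ≤ G ω := by rw [hGdef]; simp only []; linarith [hw0 k1]
    calc |σX (T h ω)| ≤ c * ((T h ω : ℝ)) ^ (-α) := hbase
      _ ≤ c * G ω := by nlinarith [hGle]
  -- integrability
  have hGsum_int : Integrable (fun ω => ∑ k ∈ Finset.range k1,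
      (E (2 ^ (k + 1) - 1)).indicator (fun _ => w k) ω) (ℙ : Measure Ω) :=
    integrable_finset_sum _ (fun k _ =>
      (integrable_const (w k)).indicator (hEmeas _))
  have hGint : Integrable G (ℙ : Measure Ω) := hGsum_int.add (integrable_const _)
  have hcGint : Integrable (fun ω => c * G ω) (ℙ : Measure Ω) := hGint.const_mul c
  -- integral bound
  have hint : |σY h| ≤ c * ((∑ k ∈ Finset.range k1,
      w k * ((ℙ : Measure Ω) (E (2 ^ (k + 1) - 1))).toReal) + w k1) := by
    have h1 : ‖∫ ω, σX (T h ω)‖ ≤ ∫ ω, c * G ω :=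
      norm_integral_le_of_norm_le hcGint (ae_of_all _ (fun ω => by
        rw [Real.norm_eq_abs]; exact hpw ω))
    have h2 : ∫ ω, c * G ω = c * ((∑ k ∈ Finset.range k1,
        w k * ((ℙ : Measure Ω) (E (2 ^ (k + 1) - 1))).toReal) + w k1) := by
      rw [integral_const_mul]
      congr 1
      rw [hGdef]
      rw [integral_add hGsum_int (integrable_const _)]
      congr 1
      · rw [integral_finset_sum _ (fun k _ =>
          (integrable_const (w k)).indicator (hEmeas _))]
        refine Finset.sum_congr rfl (fun k _ => ?_)
        rw [integral_indicator_const _ (hEmeas _), smul_eq_mul, mul_comm, Measure.real]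
      · simp
    rw [hσY h, ← Real.norm_eq_abs, ← h2]
    exact h1
  -- per-term probability bound
  have hterm : ∀ k ∈ Finset.range k1,
      w k * ((ℙ : Measure Ω) (E (2 ^ (k + 1) - 1))).toReal
        ≤ D * w k1 * (2:ℝ) ^ (-((k1 - k : ℕ) : ℝ)) := by
    intro k hk
    rw [Finset.mem_range] at hk
    set n : ℕ := 2 ^ (k + 1) - 1 with hndef
    have hn1 : 1 ≤ n := by
      have : 2 ≤ 2 ^ (k + 1) := by
        calc 2 = 2 ^ 1 := rfl
        _ ≤ 2 ^ (k + 1) := Nat.pow_le_pow_right (by norm_num) (by omega)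
      omega
    have hnR1 : (1:ℝ) ≤ (n:ℝ) := by exact_mod_cast hn1
    have hprob : ((ℙ : Measure Ω) (E n)).toReal
        ≤ Real.exp (-(h:ℝ) * p (n:ℝ)) := by
      have := aux_prob Δ hΔmeas hΔindep hΔid h n
      exact this
    have hptail : ε₀ * (n:ℝ) ^ (-β) ≤ p (n:ℝ) := htailb (n:ℝ) hnR1
    have hn2 : (n:ℝ) ≤ (2:ℝ) ^ (((k:ℝ) + 1)) := by
      have : (n:ℝ) ≤ ((2 ^ (k+1) : ℕ) : ℝ) := by exact_mod_cast Nat.sub_le _ _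
      calc (n:ℝ) ≤ ((2 ^ (k+1) : ℕ) : ℝ) := this
        _ = (2:ℝ) ^ (((k:ℝ) + 1)) := by
            push_cast
            rw [← Real.rpow_natCast 2 (k+1)]
            push_cast
            ring_nf
    have hnpow : (2:ℝ) ^ (((k:ℝ) + 1) * (-β)) ≤ (n:ℝ) ^ (-β) := by
      have h0n : (0:ℝ) < (n:ℝ) := by linarith
      have := Real.rpow_le_rpow_of_nonpos h0n hn2 (neg_nonpos.2 hβ0.le)
      calc (2:ℝ) ^ (((k:ℝ) + 1) * (-β)) = ((2:ℝ) ^ ((k:ℝ)+1)) ^ (-β) := by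
            rw [← Real.rpow_mul (by norm_num)]
        _ ≤ (n:ℝ) ^ (-β) := this
    -- h is at least 2^((k1-1)β)
    have hLpow : (2:ℝ) ^ ((L:ℝ)) ≤ (h:ℝ) := by
      have : 2 ^ L ≤ h := Nat.pow_log_le_self 2 (by omega)
      rw [Real.rpow_natCast]
      exact_mod_cast this
    have hk1ceil : ((k1:ℝ) - 1) * β ≤ (L:ℝ) := by
      have h1 : (k1:ℝ) < (L:ℝ) / β + 1 := by
        rw [hk1def]
        exact Nat.ceil_lt_add_one (by positivity)
      have h2 : (k1:ℝ) - 1 < (L:ℝ) / β := by linarith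
      have := mul_le_mul_of_nonneg_right h2.le hβ0.le
      calc ((k1:ℝ) - 1) * β ≤ ((L:ℝ) / β) * β := this
        _ = (L:ℝ) := by field_simp
    have hhge : (2:ℝ) ^ (((k1:ℝ) - 1) * β) ≤ (h:ℝ) :=
      le_trans (Real.rpow_le_rpow_of_exponent_le one_le_two hk1ceil) hLpow
    -- combine: h * (ε₀ n^{-β}) ≥ ε₀ 2^{((k1-k-2))β}
    have hexp : ε₀ * (2:ℝ) ^ ((((k1:ℝ) - (k:ℝ)) - 2) * β)
        ≤ (h:ℝ) * (ε₀ * (n:ℝ) ^ (-β)) := by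
      have h1 : (2:ℝ) ^ ((((k1:ℝ) - (k:ℝ)) - 2) * β)
          = (2:ℝ) ^ (((k1:ℝ) - 1) * β) * (2:ℝ) ^ (((k:ℝ) + 1) * (-β)) := by
        rw [← Real.rpow_add two_pos]
        ring_nf
      rw [h1]
      have h2 : (2:ℝ) ^ (((k1:ℝ) - 1) * β) * (2:ℝ) ^ (((k:ℝ) + 1) * (-β))
          ≤ (h:ℝ) * (n:ℝ) ^ (-β) := by
        apply mul_le_mul hhge hnpow (rpow_pos_of_pos two_pos _).le hhpos.le
      calc ε₀ * ((2:ℝ) ^ (((k1:ℝ) - 1) * β) * (2:ℝ) ^ (((k:ℝ) + 1) * (-β)))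
          ≤ ε₀ * ((h:ℝ) * (n:ℝ) ^ (-β)) := by
            exact mul_le_mul_of_nonneg_left h2 hε₀.le
        _ = (h:ℝ) * (ε₀ * (n:ℝ) ^ (-β)) := by ring
    have hprob2 : ((ℙ : Measure Ω) (E n)).toReal
        ≤ Real.exp (-(ε₀ * (2:ℝ) ^ ((((k1:ℝ) - (k:ℝ)) - 2) * β))) := by
      apply le_trans hprob
      apply Real.exp_le_exp.2
      have h3 : (h:ℝ) * (ε₀ * (n:ℝ) ^ (-β)) ≤ (h:ℝ) * p (n:ℝ) :=
        mul_le_mul_of_nonneg_left hptail hhpos.le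
      nlinarith [hexp]
    -- now use aux_geom_dominate with m = k1 - k
    set m : ℕ := k1 - k with hmdef
    have hmcast : (m:ℝ) = (k1:ℝ) - (k:ℝ) := by
      rw [hmdef]; push_cast [Nat.cast_sub hk.le]; ring
    have hwk : w k = w k1 * (2:ℝ) ^ ((m:ℝ) * α) := by
      rw [hwdef]
      simp only []
      rw [← Real.rpow_add two_pos, hmcast]
      ring_nf
    calc w k * ((ℙ : Measure Ω) (E n)).toReal
        ≤ w k * Real.exp (-(ε₀ * (2:ℝ) ^ ((((k1:ℝ) - (k:ℝ)) - 2) * β))) :=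
          mul_le_mul_of_nonneg_left hprob2 (hw0 k)
      _ = w k1 * ((2:ℝ) ^ ((m:ℝ) * α) *
            Real.exp (-(ε₀ * (2:ℝ) ^ (((m:ℝ) - 2) * β)))) := by
          rw [hwk, hmcast]; ring
      _ ≤ w k1 * (D * (2:ℝ) ^ (-(m:ℝ))) :=
          mul_le_mul_of_nonneg_left (hDle m) (hw0 k1)
      _ = D * w k1 * (2:ℝ) ^ (-((m:ℕ) : ℝ)) := by ring
  -- geometric sum bound
  have hgeom : ∑ k ∈ Finset.range k1, (2:ℝ) ^ (-((k1 - k : ℕ) : ℝ)) ≤ 1 := by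
    have hconv : ∀ k ∈ Finset.range k1,
        (2:ℝ) ^ (-((k1 - k : ℕ) : ℝ)) = (1/2:ℝ) ^ (k1 - k) := by
      intro k _
      rw [Real.rpow_neg (by norm_num), Real.rpow_natCast]
      rw [div_pow, one_pow, one_div]
    rw [Finset.sum_congr rfl hconv]
    have hrefl : ∑ k ∈ Finset.range k1, (1/2:ℝ) ^ (k1 - k)
        = ∑ k ∈ Finset.range k1, (1/2:ℝ) ^ (k + 1) := by
      rw [← Finset.sum_range_reflect]
      refine Finset.sum_congr rfl (fun k hk => ?_)
      rw [Finset.mem_range] at hk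
      congr 1
      omega
    rw [hrefl]
    have : ∑ k ∈ Finset.range k1, (1/2:ℝ) ^ (k + 1)
        = (1/2) * ∑ k ∈ Finset.range k1, (1/2:ℝ) ^ k := by
      rw [Finset.mul_sum]
      refine Finset.sum_congr rfl (fun k _ => ?_)
      rw [pow_succ]; ring
    rw [this]
    have hgs : ∑ k ∈ Finset.range k1, (1/2:ℝ) ^ k ≤ 2 := by
      have := geom_sum_eq (by norm_num : (1/2:ℝ) ≠ 1) k1
      rw [this]
      have hp : (0:ℝ) ≤ (1/2:ℝ) ^ k1 := by positivity
      rw [div_le_iff_of_neg (by norm_num : (1/2:ℝ) - 1 < 0)]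
      linarith
    linarith
  -- final bound on w k1
  have hwk1 : w k1 ≤ (2:ℝ) ^ (α / β) * (h:ℝ) ^ (-(α / β)) := by
    have hk1ge : (L:ℝ) / β ≤ (k1:ℝ) := Nat.le_ceil _
    have h1 : w k1 ≤ (2:ℝ) ^ (((L:ℝ) / β) * (-α)) := by
      rw [hwdef]
      apply Real.rpow_le_rpow_of_exponent_le one_le_two
      nlinarith [hk1ge]
    have h2 : (2:ℝ) ^ (((L:ℝ) / β) * (-α))
        = (2:ℝ) ^ (α / β) * ((2:ℝ) ^ ((L:ℝ) + 1)) ^ (-(α / β)) := by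
      rw [← Real.rpow_mul (by norm_num : (0:ℝ) ≤ 2), ← Real.rpow_add two_pos]
      congr 1
      field_simp
      ring
    have h3 : (h:ℝ) ≤ (2:ℝ) ^ ((L:ℝ) + 1) := by
      have : h < 2 ^ (L + 1) := Nat.lt_pow_succ_log_self (by norm_num) h
      have hcast : (h:ℝ) ≤ ((2 ^ (L+1) : ℕ) : ℝ) := by exact_mod_cast this.le
      calc (h:ℝ) ≤ ((2 ^ (L+1) : ℕ) : ℝ) := hcast
        _ = (2:ℝ) ^ ((L:ℝ) + 1) := by
          push_cast
          rw [← Real.rpow_natCast 2 (L+1)]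
          push_cast
          ring_nf
    have h4 : ((2:ℝ) ^ ((L:ℝ) + 1)) ^ (-(α / β)) ≤ (h:ℝ) ^ (-(α / β)) :=
      Real.rpow_le_rpow_of_nonpos hhpos h3 (neg_nonpos.2 (by positivity))
    calc w k1 ≤ (2:ℝ) ^ (((L:ℝ) / β) * (-α)) := h1
      _ = (2:ℝ) ^ (α / β) * ((2:ℝ) ^ ((L:ℝ) + 1)) ^ (-(α / β)) := h2
      _ ≤ (2:ℝ) ^ (α / β) * (h:ℝ) ^ (-(α / β)) :=
          mul_le_mul_of_nonneg_left h4 (rpow_pos_of_pos two_pos _).le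
  -- put it all together
  have hsumle : ∑ k ∈ Finset.range k1,
      w k * ((ℙ : Measure Ω) (E (2 ^ (k + 1) - 1))).toReal ≤ D * w k1 := by
    calc ∑ k ∈ Finset.range k1, w k * ((ℙ : Measure Ω) (E (2 ^ (k + 1) - 1))).toReal
        ≤ ∑ k ∈ Finset.range k1, D * w k1 * (2:ℝ) ^ (-((k1 - k : ℕ) : ℝ)) :=
          Finset.sum_le_sum hterm
      _ = D * w k1 * ∑ k ∈ Finset.range k1, (2:ℝ) ^ (-((k1 - k : ℕ) : ℝ)) := by
          rw [Finset.mul_sum]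
      _ ≤ D * w k1 * 1 := by
          apply mul_le_mul_of_nonneg_left hgeom
          exact mul_nonneg hD.le (hw0 k1)
      _ = D * w k1 := by ring
  calc |σY h| ≤ c * ((∑ k ∈ Finset.range k1,
        w k * ((ℙ : Measure Ω) (E (2 ^ (k + 1) - 1))).toReal) + w k1) := hint
    _ ≤ c * (D * w k1 + w k1) := by nlinarith [hsumle]
    _ = c * (D + 1) * w k1 := by ring
    _ ≤ c * (D + 1) * ((2:ℝ) ^ (α / β) * (h:ℝ) ^ (-(α / β))) := by
        apply mul_le_mul_of_nonneg_left hwk1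
        positivity
    _ = C * (h:ℝ) ^ (-(α / β)) := by rw [hC]; ring
end

section
/- Let T_h = Δ_1 + ... + Δ_h with Δ_j i.i.d. positive random variables such that P(Δ_1 > x) ≥ C x^{-β} for all large x, where β ∈ (0,1) and C > 0. Then for 0 < α < 1, E[T_h^{-α}] ≤ C' h^{-α/β} for some constant C' and all large h. -/
open MeasureTheory ProbabilityTheory Real Filter

lemma aux_exp_neg_le (m : ℕ) {x : ℝ} (hx : 0 < x) : Real.exp (-x) ≤ ((m:ℝ)/x)^m := by
  rcases Nat.eq_zero_or_pos m with hm | hm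
  · simp only [hm, pow_zero]
    exact Real.exp_le_one_iff.mpr (by linarith)
  · have hm' : (0:ℝ) < m := by exact_mod_cast hm
    have h1 : (x / m) ^ m ≤ Real.exp x := by
      have h2 : x / m ≤ Real.exp (x / m) := by
        have := Real.add_one_le_exp (x / m); linarith
      calc (x/m)^m ≤ (Real.exp (x/m))^m := pow_le_pow_left₀ (by positivity) h2 m
        _ = Real.exp x := by
          rw [← Real.exp_nat_mul]
          congr 1; field_simp
    have hpos : (0:ℝ) < (x/m)^m := by positivity
    have : Real.exp (-x) ≤ ((x/m)^m)⁻¹ := by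
      rw [Real.exp_neg]
      exact inv_anti₀ hpos h1
    calc Real.exp (-x) ≤ ((x/m)^m)⁻¹ := this
      _ = ((m:ℝ)/x)^m := by rw [← inv_pow]; congr 1; field_simp

lemma aux_prob_prod {Ω : Type*} [MeasureSpace Ω] [IsProbabilityMeasure (ℙ : Measure Ω)]
    (Δ : ℕ → Ω → ℕ) (hΔindep : iIndepFun Δ)
    (hΔid : ∀ i j, IdentDistrib (Δ i) (Δ j)) (h : ℕ) (t : ℝ) :
    (ℙ (⋂ j ∈ Finset.range h, {ω | (Δ j ω : ℝ) ≤ t})).toReal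
      = ((ℙ {ω | (Δ 0 ω : ℝ) ≤ t}).toReal)^h := by
  have hmeas : ∀ j : ℕ, MeasurableSet[(inferInstance : MeasurableSpace ℕ).comap (Δ j)]
      {ω | (Δ j ω : ℝ) ≤ t} := by
    intro j
    exact ⟨{n : ℕ | (n:ℝ) ≤ t}, trivial, rfl⟩
  have hprod := hΔindep.meas_biInter (S := Finset.range h)
      (s := fun j => {ω | (Δ j ω : ℝ) ≤ t}) (fun i _ => hmeas i)
  rw [hprod]
  have hid : ∀ j : ℕ, ℙ {ω | (Δ j ω : ℝ) ≤ t} = ℙ {ω | (Δ 0 ω : ℝ) ≤ t} := by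
    intro j
    have := (hΔid j 0).measure_mem_eq (s := {n : ℕ | (n:ℝ) ≤ t}) trivial
    exact this
  simp only [hid]
  rw [Finset.prod_const, Finset.card_range, ENNReal.toReal_pow]

lemma aux_pointwise {Ω : Type*} (Δ : ℕ → Ω → ℕ) (hΔpos : ∀ j ω, 1 ≤ Δ j ω)
    (T : ℕ → Ω → ℕ) (hT : ∀ n ω, T n ω = ∑ j ∈ Finset.range n, Δ j ω)
    (h L : ℕ) (hh : 1 ≤ h) (hL : 1 ≤ L) (x₁ α : ℝ) (hx₁ : 1 ≤ x₁) (hα0 : 0 < α) (ω : Ω) :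
    (T h ω : ℝ)^(-α) ≤ (2:ℝ)^(-(α*(L:ℝ))) + ∑ k ∈ Finset.range L,
      (⋂ j ∈ Finset.range h, {ω' | (Δ j ω' : ℝ) ≤ x₁ * 2^(((k+1:ℕ)):ℝ)}).indicator
        (fun _ => (2:ℝ)^(-(α*(k:ℝ)))) ω := by
  classical
  set B : ℕ → Set Ω := fun k => ⋂ j ∈ Finset.range h, {ω' | (Δ j ω' : ℝ) ≤ x₁ * 2^((k:ℕ):ℝ)}
    with hBdef
  have hconv : ∀ y : ℝ, ((2:ℝ)^y)^(-α) = (2:ℝ)^(-(α*y)) := by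
    intro y; rw [← Real.rpow_mul (by norm_num)]; ring_nf
  have hTge : ∀ j, j < h → (Δ j ω : ℝ) ≤ (T h ω : ℝ) := by
    intro j hj
    have : Δ j ω ≤ T h ω := by
      rw [hT]
      exact Finset.single_le_sum (f := fun i => Δ i ω) (fun _ _ => Nat.zero_le _)
        (Finset.mem_range.mpr hj)
    exact_mod_cast this
  have hT1 : (1:ℝ) ≤ (T h ω : ℝ) := by
    have := hTge 0 hh
    have h1 : (1:ℝ) ≤ (Δ 0 ω : ℝ) := by exact_mod_cast hΔpos 0 ω
    linarith
  have hmono : ∀ c : ℝ, 0 < c → c ≤ (T h ω : ℝ) → (T h ω : ℝ)^(-α) ≤ c^(-α) := by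
    intro c hc hcT
    exact Real.rpow_le_rpow_of_nonpos hc hcT (by linarith)
  have hBnot : ∀ k, ω ∉ B k → ∃ j < h, x₁ * 2^((k:ℕ):ℝ) < (Δ j ω : ℝ) := by
    intro k hk
    by_contra hcon
    push_neg at hcon
    exact hk (Set.mem_biInter fun j hj => hcon j (Finset.mem_range.mp hj))
  have hBnot' : ∀ k, ω ∉ B k → (2:ℝ)^((k:ℕ):ℝ) ≤ (T h ω : ℝ) := by
    intro k hk
    obtain ⟨j, hj, hjlt⟩ := hBnot k hk
    have h2k : (0:ℝ) < (2:ℝ)^((k:ℕ):ℝ) := by positivity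
    have : (2:ℝ)^((k:ℕ):ℝ) ≤ x₁ * 2^((k:ℕ):ℝ) := by nlinarith
    linarith [hTge j hj]
  have hindnonneg : ∀ k : ℕ, 0 ≤ (B (k+1)).indicator (fun _ => (2:ℝ)^(-(α*(k:ℝ)))) ω := by
    intro k
    apply Set.indicator_nonneg
    intro _ _; positivity
  have hsumnonneg : 0 ≤ ∑ k ∈ Finset.range L,
      (B (k+1)).indicator (fun _ => (2:ℝ)^(-(α*(k:ℝ)))) ω :=
    Finset.sum_nonneg fun k _ => hindnonneg k
  by_cases hB : ω ∈ B L
  · have hex : ∃ k, ω ∈ B k := ⟨L, hB⟩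
    set k₀ := Nat.find hex with hk₀def
    have hk₀L : k₀ ≤ L := Nat.find_min' hex hB
    have hmemk₀ : ω ∈ B k₀ := Nat.find_spec hex
    have hBmono : ∀ k, B k ⊆ B (k+1) := by
      intro k
      apply Set.iInter₂_mono
      intro j hj ω' hω'
      simp only [Set.mem_setOf_eq] at hω' ⊢
      have : (2:ℝ)^((k:ℕ):ℝ) ≤ (2:ℝ)^(((k+1:ℕ)):ℝ) := by
        apply Real.rpow_le_rpow_of_exponent_le one_le_two
        push_cast; linarith
      nlinarith [hω', Real.rpow_pos_of_pos (by norm_num : (0:ℝ)<2) ((k:ℕ):ℝ)]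
    have key : ∃ j, j < L ∧ ω ∈ B (j+1) ∧ (T h ω : ℝ)^(-α) ≤ (2:ℝ)^(-(α*(j:ℝ))) := by
      match hk : k₀, hmemk₀, hk₀L with
      | 0, hmem, _ =>
        refine ⟨0, hL, ?_, ?_⟩
        · exact hBmono 0 (by rw [hk] at hmemk₀; exact hmemk₀)
        · have : (T h ω : ℝ)^(-α) ≤ (1:ℝ)^(-α) := hmono 1 one_pos hT1
          simpa using this
      | (j+1), hmem, hle =>
        have hnot : ω ∉ B j := by
          have := Nat.find_min hex (m := j) (by omega)
          exact this
        refine ⟨j, by omega, by rw [hk] at hmemk₀; exact hmemk₀, ?_⟩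
        have h2j : (0:ℝ) < (2:ℝ)^((j:ℕ):ℝ) := by positivity
        have := hmono _ h2j (hBnot' j hnot)
        rwa [hconv] at this
    obtain ⟨j, hjL, hjmem, hjg⟩ := key
    have hterm : (2:ℝ)^(-(α*(j:ℝ))) =
        (B (j+1)).indicator (fun _ => (2:ℝ)^(-(α*(j:ℝ)))) ω := by
      rw [Set.indicator_of_mem hjmem]
    have hle : (2:ℝ)^(-(α*(j:ℝ))) ≤ ∑ k ∈ Finset.range L,
        (B (k+1)).indicator (fun _ => (2:ℝ)^(-(α*(k:ℝ)))) ω := by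
      rw [hterm]
      exact Finset.single_le_sum (f := fun k => (B (k+1)).indicator
        (fun _ => (2:ℝ)^(-(α*(k:ℝ)))) ω) (fun k _ => hindnonneg k) (Finset.mem_range.mpr hjL)
    have h2L : (0:ℝ) ≤ (2:ℝ)^(-(α*(L:ℝ))) := by positivity
    calc (T h ω : ℝ)^(-α) ≤ (2:ℝ)^(-(α*(j:ℝ))) := hjg
      _ ≤ _ := by linarith
  · have h2L : (0:ℝ) < (2:ℝ)^((L:ℕ):ℝ) := by positivity
    have := hmono _ h2L (hBnot' L hB)
    rw [hconv] at this
    calc (T h ω : ℝ)^(-α) ≤ (2:ℝ)^(-(α*(L:ℝ))) := this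
      _ ≤ _ := by linarith

/-- If the i.i.d. positive-integer increments satisfy `P(Δ₁ > x) ≥ C x^{-β}` for all
large `x`, with `β ∈ (0,1)`, then for `0 < α < 1` one has
`E[T_h^{-α}] ≤ C' h^{-α/β}` for some `C'` and all large `h`. -/
theorem negative_moment_random_walk_heavy_tail
    {Ω : Type*} [MeasureSpace Ω] [IsProbabilityMeasure (ℙ : Measure Ω)]
    (Δ : ℕ → Ω → ℕ)
    (hΔmeas : ∀ j, Measurable (Δ j))
    (hΔpos : ∀ j ω, 1 ≤ Δ j ω)
    (hΔindep : iIndepFun Δ)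
    (hΔid : ∀ i j, IdentDistrib (Δ i) (Δ j))
    (β : ℝ) (hβ0 : 0 < β) (hβ1 : β < 1)
    (C : ℝ) (hC : 0 < C)
    (x₀ : ℝ) (htail : ∀ x : ℝ, x₀ ≤ x →
      C * x ^ (-β) ≤ ((ℙ : Measure Ω) {ω | x < (Δ 0 ω : ℝ)}).toReal)
    (α : ℝ) (hα0 : 0 < α) (hα1 : α < 1)
    (T : ℕ → Ω → ℕ) (hT : ∀ n ω, T n ω = ∑ j ∈ Finset.range n, Δ j ω) :
    ∃ C' : ℝ, 0 < C' ∧ ∀ᶠ h : ℕ in atTop,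
      ∫ ω, (T h ω : ℝ) ^ (-α) ≤ C' * (h : ℝ) ^ (-(α / β)) := by
  classical
  set x₁ : ℝ := max x₀ 1 with hx₁def
  have hx₁one : (1:ℝ) ≤ x₁ := le_max_right _ _
  have hx₁pos : (0:ℝ) < x₁ := lt_of_lt_of_le one_pos hx₁one
  have hx₁x₀ : x₀ ≤ x₁ := le_max_left _ _
  set m : ℕ := ⌊α/β⌋₊ + 1 with hmdef
  have hm1 : 1 ≤ m := Nat.le_add_left 1 _
  have hmpos : (0:ℝ) < m := by exact_mod_cast hm1
  have hmα : α / β < (m:ℝ) := by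
    have := Nat.lt_floor_add_one (α/β)
    push_cast [hmdef]
    push_cast at this
    linarith
  have hδpos : 0 < β * (m:ℝ) - α := by
    have h1 : α < β * m := by
      have := (div_lt_iff₀ hβ0).mp hmα
      linarith
    linarith
  set δ : ℝ := β * (m:ℝ) - α with hδdef
  have h2δ : (1:ℝ) < (2:ℝ) ^ δ :=
    Real.one_lt_rpow_iff_of_pos (by norm_num) |>.2 (Or.inl ⟨by norm_num, hδpos⟩)
  set D : ℝ := ((m:ℝ)/C)^m with hDdef
  have hDpos : 0 < D := by positivity
  set A : ℝ := D * x₁ ^ (β*(m:ℝ)) * (2:ℝ)^(β*(m:ℝ)) * (2:ℝ)^δ / ((2:ℝ)^δ - 1) with hAdef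
  have hApos : 0 < A := by
    apply div_pos
    · positivity
    · linarith
  refine ⟨A + 1, by linarith, ?_⟩
  rw [Filter.eventually_atTop]
  refine ⟨2, fun h hh => ?_⟩
  have hh1 : 1 ≤ h := le_trans (by norm_num) hh
  have hh2 : (2:ℝ) ≤ (h:ℝ) := by exact_mod_cast hh
  have hhpos : (0:ℝ) < (h:ℝ) := by linarith
  set x : ℝ := (h:ℝ) ^ (1/β) with hxdef
  have hxpos : 0 < x := Real.rpow_pos_of_pos hhpos _
  have hx1 : 1 < x := Real.one_lt_rpow_iff_of_pos hhpos |>.2 (Or.inl ⟨by linarith, by positivity⟩)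
  set L : ℕ := ⌈Real.logb 2 x⌉₊ with hLdef
  have hlogpos : 0 < Real.logb 2 x := Real.logb_pos (by norm_num) hx1
  have hL1 : 1 ≤ L := by
    rw [hLdef]
    exact Nat.one_le_ceil_iff.mpr hlogpos
  have hLlb : x ≤ (2:ℝ)^((L:ℕ):ℝ) := by
    have h1 : Real.logb 2 x ≤ (L:ℝ) := Nat.le_ceil _
    calc x = (2:ℝ) ^ (Real.logb 2 x) := (Real.rpow_logb (by norm_num) (by norm_num) hxpos).symm
      _ ≤ (2:ℝ)^((L:ℕ):ℝ) := Real.rpow_le_rpow_of_exponent_le (by norm_num) h1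
  have hLub : (2:ℝ)^((L:ℕ):ℝ) ≤ 2 * x := by
    have h1 : (L:ℝ) < Real.logb 2 x + 1 := by
      have := Nat.ceil_lt_add_one (le_of_lt hlogpos)
      rw [hLdef]; exact_mod_cast this
    calc (2:ℝ)^((L:ℕ):ℝ) ≤ (2:ℝ) ^ (Real.logb 2 x + 1) :=
          Real.rpow_le_rpow_of_exponent_le (by norm_num) (le_of_lt h1)
      _ = 2 * x := by
          rw [Real.rpow_add (by norm_num), Real.rpow_logb (by norm_num) (by norm_num) hxpos,
            Real.rpow_one]; ring
  -- the sets
  set B : ℕ → Set Ω := fun k => ⋂ j ∈ Finset.range h, {ω' | (Δ j ω' : ℝ) ≤ x₁ * 2^((k:ℕ):ℝ)}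
    with hBdef
  have hBmeas : ∀ k, MeasurableSet (B k) := by
    intro k
    apply MeasurableSet.biInter (Set.to_countable _)
    intro j _
    have : MeasurableSet (Δ j ⁻¹' {n : ℕ | (n:ℝ) ≤ x₁ * 2^((k:ℕ):ℝ)}) := hΔmeas j trivial
    exact this
  -- integrability of g
  have hTmeas : Measurable (T h) := by
    have hTe : T h = fun ω => ∑ j ∈ Finset.range h, Δ j ω := funext fun ω => hT h ω
    rw [hTe]
    exact Finset.measurable_sum _ fun j _ => hΔmeas j
  have hgmeas : Measurable (fun ω => (T h ω : ℝ)^(-α)) := by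
    intro s _
    have : MeasurableSet (T h ⁻¹' ((fun n : ℕ => (n:ℝ)^(-α)) ⁻¹' s)) := hTmeas trivial
    exact this
  have hT1 : ∀ ω, (1:ℝ) ≤ (T h ω : ℝ) := by
    intro ω
    have : 1 ≤ T h ω := by
      rw [hT]
      calc 1 ≤ Δ 0 ω := hΔpos 0 ω
        _ ≤ ∑ j ∈ Finset.range h, Δ j ω :=
          Finset.single_le_sum (f := fun i => Δ i ω) (fun _ _ => Nat.zero_le _)
            (Finset.mem_range.mpr hh1)
    exact_mod_cast this
  have hg_int : Integrable (fun ω => (T h ω : ℝ)^(-α)) := by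
    apply Integrable.mono' (integrable_const (1:ℝ)) hgmeas.aestronglyMeasurable
    filter_upwards with ω
    rw [Real.norm_eq_abs, abs_of_nonneg (Real.rpow_nonneg (by positivity) _)]
    exact Real.rpow_le_one_of_one_le_of_nonpos (hT1 ω) (by linarith)
  have hf_int : Integrable (fun ω => (2:ℝ)^(-(α*(L:ℝ))) + ∑ k ∈ Finset.range L,
      (B (k+1)).indicator (fun _ => (2:ℝ)^(-(α*(k:ℝ)))) ω) := by
    apply (integrable_const _).add
    apply integrable_finset_sum
    intro k _
    exact (integrable_const _).indicator (hBmeas (k+1))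
  -- step 1 : integral_mono
  have step1 : ∫ ω, (T h ω : ℝ)^(-α) ≤ (2:ℝ)^(-(α*(L:ℝ))) + ∑ k ∈ Finset.range L,
      (2:ℝ)^(-(α*(k:ℝ))) * (ℙ (B (k+1))).toReal := by
    have hmono := integral_mono hg_int hf_int
      (fun ω => aux_pointwise Δ hΔpos T hT h L hh1 hL1 x₁ α hx₁one hα0 ω)
    rw [integral_add (integrable_const _) (integrable_finset_sum _ fun k _ =>
      (integrable_const _).indicator (hBmeas (k+1))), integral_const,
      integral_finset_sum _ (fun k _ => (integrable_const _).indicator (hBmeas (k+1)))] at hmono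
    simp only [measure_univ, probReal_univ, ENNReal.toReal_one, one_smul] at hmono
    refine le_trans hmono ?_
    apply add_le_add_right
    apply Finset.sum_le_sum
    intro k _
    rw [integral_indicator_const _ (hBmeas (k+1)), smul_eq_mul, mul_comm, measureReal_def]
  -- step 2 : probability bound
  have hPk : ∀ k : ℕ, (ℙ (B k)).toReal ≤ D * ((h:ℝ)⁻¹)^m * (x₁ * 2^((k:ℕ):ℝ))^(β*(m:ℝ)) := by
    intro k
    set t : ℝ := x₁ * 2^((k:ℕ):ℝ) with htdef
    have h2k1 : (1:ℝ) ≤ (2:ℝ)^((k:ℕ):ℝ) := Real.one_le_rpow (by norm_num) (by positivity)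
    have htpos : 0 < t := by positivity
    have htx₀ : x₀ ≤ t := le_trans hx₁x₀ (by nlinarith)
    set p : ℝ := C * t^(-β) with hpdef
    have hppos : 0 < p := by
      have := Real.rpow_pos_of_pos htpos (-β)
      positivity
    set q : ℝ := (ℙ {ω | (Δ 0 ω : ℝ) ≤ t}).toReal with hqdef
    have hq0 : 0 ≤ q := ENNReal.toReal_nonneg
    have hq1 : q ≤ 1 - p := by
      have hcompl : {ω | (Δ 0 ω : ℝ) ≤ t} = {ω | t < (Δ 0 ω : ℝ)}ᶜ := by
        ext ω; simp [not_lt]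
      have hmeas' : MeasurableSet {ω | t < (Δ 0 ω : ℝ)} := by
        have : MeasurableSet (Δ 0 ⁻¹' {n : ℕ | t < (n:ℝ)}) := hΔmeas 0 trivial
        exact this
      have := htail t htx₀
      rw [hqdef, hcompl, measure_compl hmeas' (measure_ne_top _ _)]
      rw [measure_univ, ENNReal.toReal_sub_of_le prob_le_one ENNReal.one_ne_top]
      simp only [ENNReal.toReal_one]
      linarith
    have hq1' : 0 ≤ 1 - p := le_trans hq0 hq1
    have hprod : (ℙ (B k)).toReal = q^h := aux_prob_prod Δ hΔindep hΔid h t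
    have hbound : q^h ≤ ((m:ℝ)/((h:ℝ)*p))^m := by
      calc q^h ≤ (1-p)^h := pow_le_pow_left₀ hq0 hq1 h
        _ ≤ (Real.exp (-p))^h := by
            apply pow_le_pow_left₀ hq1'
            have := Real.add_one_le_exp (-p)
            linarith
        _ = Real.exp (-((h:ℝ)*p)) := by
            rw [← Real.exp_nat_mul]; ring_nf
        _ ≤ ((m:ℝ)/((h:ℝ)*p))^m := aux_exp_neg_le m (by positivity)
    have heq : ((m:ℝ)/((h:ℝ)*p))^m = D * ((h:ℝ)⁻¹)^m * t^(β*(m:ℝ)) := by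
      have e1 : (m:ℝ)/((h:ℝ)*p) = ((m:ℝ)/C) * (h:ℝ)⁻¹ * t^β := by
        rw [hpdef, Real.rpow_neg (le_of_lt htpos)]
        have h1 : t^β ≠ 0 := ne_of_gt (Real.rpow_pos_of_pos htpos β)
        field_simp
      rw [e1, mul_pow, mul_pow, hDdef]
      congr 1
      rw [← Real.rpow_natCast (t^β) m, ← Real.rpow_mul (le_of_lt htpos)]
    rw [hprod]
    rw [heq] at hbound
    exact hbound
  -- step 3 : summation
  have hterm : ∀ k : ℕ, (2:ℝ)^(-(α*(k:ℝ))) * (D * ((h:ℝ)⁻¹)^m * (x₁ * 2^(((k+1:ℕ)):ℝ))^(β*(m:ℝ)))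
      = (D * ((h:ℝ)⁻¹)^m * x₁^(β*(m:ℝ)) * (2:ℝ)^(β*(m:ℝ))) * ((2:ℝ)^δ)^k := by
    intro k
    have e1 : (x₁ * 2^(((k+1:ℕ)):ℝ))^(β*(m:ℝ))
        = x₁^(β*(m:ℝ)) * (2:ℝ)^((((k+1:ℕ)):ℝ)*(β*(m:ℝ))) := by
      rw [Real.mul_rpow (le_of_lt hx₁pos) (by positivity),
        ← Real.rpow_mul (by norm_num : (0:ℝ) ≤ 2)]
    have e2 : ((2:ℝ)^δ)^k = (2:ℝ)^(δ*(k:ℝ)) := by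
      rw [← Real.rpow_natCast ((2:ℝ)^δ) k, ← Real.rpow_mul (by norm_num)]
    rw [e1]
    have e3 : (2:ℝ)^(-(α*(k:ℝ))) * (2:ℝ)^((((k+1:ℕ)):ℝ)*(β*(m:ℝ)))
        = (2:ℝ)^(β*(m:ℝ)) * (2:ℝ)^(δ*(k:ℝ)) := by
      rw [← Real.rpow_add (by norm_num : (0:ℝ) < 2), ← Real.rpow_add (by norm_num : (0:ℝ) < 2)]
      congr 1
      rw [hδdef]
      push_cast
      ring
    calc (2:ℝ)^(-(α*(k:ℝ))) * (D * ((h:ℝ)⁻¹)^m * (x₁^(β*(m:ℝ)) * (2:ℝ)^((((k+1:ℕ)):ℝ)*(β*(m:ℝ)))))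
        = (D * ((h:ℝ)⁻¹)^m * x₁^(β*(m:ℝ))) * ((2:ℝ)^(-(α*(k:ℝ))) * (2:ℝ)^((((k+1:ℕ)):ℝ)*(β*(m:ℝ)))) := by ring
      _ = (D * ((h:ℝ)⁻¹)^m * x₁^(β*(m:ℝ))) * ((2:ℝ)^(β*(m:ℝ)) * (2:ℝ)^(δ*(k:ℝ))) := by rw [e3]
      _ = (D * ((h:ℝ)⁻¹)^m * x₁^(β*(m:ℝ)) * (2:ℝ)^(β*(m:ℝ))) * ((2:ℝ)^δ)^k := by
          rw [e2]; ring
  have hgeom : ∑ k ∈ Finset.range L, ((2:ℝ)^δ)^k ≤ ((2:ℝ)^δ)^L / ((2:ℝ)^δ - 1) := by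
    rw [geom_sum_eq (ne_of_gt h2δ)]
    apply div_le_div_of_nonneg_right ?_ (by linarith)
    · linarith [pow_pos (lt_trans one_pos h2δ) L]
  have hrL : ((2:ℝ)^δ)^L ≤ (2:ℝ)^δ * x^δ := by
    have e2 : ((2:ℝ)^δ)^L = ((2:ℝ)^((L:ℕ):ℝ))^δ := by
      rw [← Real.rpow_natCast ((2:ℝ)^δ) L, ← Real.rpow_mul (by norm_num),
        ← Real.rpow_mul (by norm_num), mul_comm]
    rw [e2]
    calc ((2:ℝ)^((L:ℕ):ℝ))^δ ≤ (2*x)^δ :=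
          Real.rpow_le_rpow (by positivity) hLub (le_of_lt hδpos)
      _ = (2:ℝ)^δ * x^δ := Real.mul_rpow (by norm_num) (le_of_lt hxpos)
  -- powers of h
  have hhx : ((h:ℝ)⁻¹)^m * x^δ = (h:ℝ)^(-(α/β)) := by
    rw [hxdef, ← Real.rpow_natCast ((h:ℝ)⁻¹) m, ← Real.rpow_neg_one (h:ℝ),
      ← Real.rpow_mul (le_of_lt hhpos), ← Real.rpow_mul (le_of_lt hhpos),
      ← Real.rpow_add hhpos]
    congr 1
    rw [hδdef]
    field_simp
    ring
  have htail2 : (2:ℝ)^(-(α*(L:ℝ))) ≤ (h:ℝ)^(-(α/β)) := by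
    have e1 : (2:ℝ)^(-(α*(L:ℝ))) = ((2:ℝ)^((L:ℕ):ℝ))^(-α) := by
      rw [← Real.rpow_mul (by norm_num)]
      ring_nf
    have e2 : x^(-α) = (h:ℝ)^(-(α/β)) := by
      rw [hxdef, ← Real.rpow_mul (le_of_lt hhpos)]
      congr 1
      field_simp
    rw [e1, ← e2]
    exact Real.rpow_le_rpow_of_nonpos hxpos hLlb (by linarith)
  -- final assembly
  have hsum : ∑ k ∈ Finset.range L, (2:ℝ)^(-(α*(k:ℝ))) * (ℙ (B (k+1))).toReal
      ≤ A * (h:ℝ)^(-(α/β)) := by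
    have step : ∑ k ∈ Finset.range L, (2:ℝ)^(-(α*(k:ℝ))) * (ℙ (B (k+1))).toReal
        ≤ ∑ k ∈ Finset.range L, (D * ((h:ℝ)⁻¹)^m * x₁^(β*(m:ℝ)) * (2:ℝ)^(β*(m:ℝ))) * ((2:ℝ)^δ)^k := by
      apply Finset.sum_le_sum
      intro k _
      rw [← hterm k]
      exact mul_le_mul_of_nonneg_left (hPk (k+1)) (by positivity)
    refine le_trans step ?_
    rw [← Finset.mul_sum]
    have hconst : 0 ≤ D * ((h:ℝ)⁻¹)^m * x₁^(β*(m:ℝ)) * (2:ℝ)^(β*(m:ℝ)) := by positivity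
    calc (D * ((h:ℝ)⁻¹)^m * x₁^(β*(m:ℝ)) * (2:ℝ)^(β*(m:ℝ))) * ∑ k ∈ Finset.range L, ((2:ℝ)^δ)^k
        ≤ (D * ((h:ℝ)⁻¹)^m * x₁^(β*(m:ℝ)) * (2:ℝ)^(β*(m:ℝ))) * (((2:ℝ)^δ * x^δ) / ((2:ℝ)^δ - 1)) := by
          apply mul_le_mul_of_nonneg_left ?_ hconst
          refine le_trans hgeom ?_
          apply div_le_div_of_nonneg_right hrL (by linarith)
      _ = A * (h:ℝ)^(-(α/β)) := by
          rw [hAdef, ← hhx]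
          field_simp
  calc ∫ ω, (T h ω : ℝ)^(-α) ≤ (2:ℝ)^(-(α*(L:ℝ))) + ∑ k ∈ Finset.range L,
        (2:ℝ)^(-(α*(k:ℝ))) * (ℙ (B (k+1))).toReal := step1
    _ ≤ (h:ℝ)^(-(α/β)) + A * (h:ℝ)^(-(α/β)) := add_le_add htail2 hsum
    _ = (A + 1) * (h:ℝ)^(-(α/β)) := by ring
end

section
/- Assume σ_X(h) = h^{-α} L(h) with 0 < α < 1 and L slowly varying, and let β = sup{γ : E[T_1^γ] < ∞} ∈ (0,1). Then for every ε > 0 there is a constant C_1 > 0 such that σ_Y(h) = E[σ_X(T_h)] ≥ C_1 h^{-α/β - ε} for all large h; in fact σ_Y(h)/h^{-α/β - ε} → ∞. -/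
open MeasureTheory ProbabilityTheory Real Filter

lemma aux_sum_rpow_le {ι : Type*} (s : Finset ι) (f : ι → ℝ) (hf : ∀ i ∈ s, 0 ≤ f i)
    {p : ℝ} (hp0 : 0 < p) (hp1 : p ≤ 1) :
    (∑ i ∈ s, f i) ^ p ≤ ∑ i ∈ s, f i ^ p := by
  classical
  induction s using Finset.cons_induction with
  | empty => simp [Real.zero_rpow hp0.ne']
  | cons a s ha ih =>
      rw [Finset.sum_cons, Finset.sum_cons]
      have hfa := hf a (Finset.mem_cons_self a s)
      have hfs : ∀ i ∈ s, 0 ≤ f i := fun i hi => hf i (Finset.mem_cons_of_mem hi)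
      have hsum : 0 ≤ ∑ i ∈ s, f i := Finset.sum_nonneg hfs
      have hbin : (f a + ∑ i ∈ s, f i) ^ p ≤ f a ^ p + (∑ i ∈ s, f i) ^ p := by
        have := NNReal.rpow_add_le_add_rpow ⟨f a, hfa⟩ ⟨_, hsum⟩ hp0.le hp1
        have h2 := NNReal.coe_le_coe.2 this
        push_cast [NNReal.coe_rpow] at h2
        exact h2
      exact hbin.trans (by linarith [ih hfs])

lemma aux_dyadic_upper {f : ℝ → ℝ} {X δ : ℝ} (hX : 1 ≤ X) (hδ : 0 < δ)
    (hpos : ∀ x, X ≤ x → 0 < f x)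
    (hmono : ∀ ⦃x y⦄, X ≤ x → x ≤ y → f x ≤ f y)
    (hrat : ∀ x, X ≤ x → f (2 * x) ≤ 2 ^ δ * f x) :
    ∀ x, X ≤ x → f x ≤ (2 ^ δ * f X / X ^ δ) * x ^ δ := by
  have hX0 : (0:ℝ) < X := lt_of_lt_of_le one_pos hX
  have key : ∀ n : ℕ, f (2 ^ (n:ℝ) * X) ≤ 2 ^ (δ * n) * f X := by
    intro n
    induction n with
    | zero => simp
    | succ n ih =>
        have h1 : (2:ℝ) ^ ((n+1 : ℕ):ℝ) * X = 2 * (2 ^ (n:ℝ) * X) := by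
          push_cast
          rw [Real.rpow_add two_pos, Real.rpow_one]
          ring
        have h2 : X ≤ 2 ^ (n:ℝ) * X := by
          nth_rewrite 1 [← one_mul X]
          gcongr
          exact Real.one_le_rpow one_le_two (Nat.cast_nonneg n)
        calc f ((2:ℝ) ^ ((n+1:ℕ):ℝ) * X) = f (2 * (2 ^ (n:ℝ) * X)) := by rw [h1]
          _ ≤ 2 ^ δ * f (2 ^ (n:ℝ) * X) := hrat _ h2
          _ ≤ 2 ^ δ * (2 ^ (δ * n) * f X) := by
              have := Real.rpow_pos_of_pos two_pos δ
              gcongr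
          _ = 2 ^ (δ * ((n+1:ℕ):ℝ)) * f X := by
              rw [← mul_assoc, ← Real.rpow_add two_pos]
              push_cast
              ring_nf
  intro x hx
  have hx0 : (0:ℝ) < x := lt_of_lt_of_le hX0 hx
  have hxX : (1:ℝ) ≤ x / X := (one_le_div hX0).2 hx
  set l := Real.logb 2 (x / X) with hl
  have hl0 : 0 ≤ l := Real.logb_nonneg one_lt_two hxX
  set n := ⌊l⌋₊ with hn
  have hn1 : (n:ℝ) ≤ l := Nat.floor_le hl0
  have hn2 : l < (n:ℝ) + 1 := Nat.lt_floor_add_one l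
  have hrl : (2:ℝ) ^ l = x / X := Real.rpow_logb two_pos (by norm_num) (by positivity)
  have hle1 : (2:ℝ) ^ (n:ℝ) ≤ x / X := by
    rw [← hrl]; exact Real.rpow_le_rpow_left_iff one_lt_two |>.2 hn1
  have hle2 : x / X ≤ (2:ℝ) ^ ((n:ℝ) + 1) := by
    rw [← hrl]; exact (Real.rpow_le_rpow_left_iff one_lt_two).2 hn2.le
  have hxle : x ≤ 2 ^ (((n+1:ℕ)):ℝ) * X := by
    push_cast
    calc x = (x / X) * X := by field_simp
      _ ≤ 2 ^ ((n:ℝ)+1) * X := by gcongr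
  have h3 : f x ≤ 2 ^ (δ * ((n+1:ℕ):ℝ)) * f X := (hmono hx hxle).trans (key (n+1))
  have h4 : (2:ℝ) ^ (δ * ((n+1:ℕ):ℝ)) ≤ 2 ^ δ * (x / X) ^ δ := by
    push_cast
    rw [mul_add, mul_one, Real.rpow_add two_pos, mul_comm δ (n:ℝ), Real.rpow_mul two_pos.le]
    have := Real.rpow_le_rpow (Real.rpow_nonneg two_pos.le _) hle1 hδ.le
    have h2δ : (0:ℝ) ≤ 2 ^ δ := (Real.rpow_pos_of_pos two_pos δ).le
    nlinarith [Real.rpow_pos_of_pos two_pos δ]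
  have hfX := hpos X le_rfl
  calc f x ≤ 2 ^ (δ * ((n+1:ℕ):ℝ)) * f X := h3
    _ ≤ (2 ^ δ * (x / X) ^ δ) * f X := by gcongr
    _ = (2 ^ δ * f X / X ^ δ) * x ^ δ := by
        rw [Real.div_rpow hx0.le hX0.le]
        field_simp

lemma aux_slow_bounds (L : ℝ → ℝ) (hLpos : ∀ x, 0 < x → 0 < L x)
    (hL2 : Tendsto (fun x : ℝ => L (2 * x) / L x) atTop (nhds 1))
    (hLmono : ∃ M : ℝ, MonotoneOn L (Set.Ici M) ∨ AntitoneOn L (Set.Ici M))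
    {δ : ℝ} (hδ : 0 < δ) :
    ∃ X c C : ℝ, 1 ≤ X ∧ 0 < c ∧ 0 < C ∧
      ∀ x, X ≤ x → c * x ^ (-δ) ≤ L x ∧ L x ≤ C * x ^ δ := by
  obtain ⟨M, hM⟩ := hLmono
  have hlt1 : (2:ℝ) ^ (-δ) < 1 := by
    rw [← Real.rpow_zero 2]
    exact Real.rpow_lt_rpow_left_iff one_lt_two |>.2 (by linarith)
  have hgt1 : (1:ℝ) < 2 ^ δ := by
    rw [← Real.rpow_zero 2]
    exact Real.rpow_lt_rpow_left_iff one_lt_two |>.2 hδ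
  have hev : ∀ᶠ x : ℝ in atTop, L (2 * x) / L x ∈ Set.Ioo ((2:ℝ) ^ (-δ)) ((2:ℝ) ^ δ) := by
    apply hL2
    exact Ioo_mem_nhds hlt1 hgt1
  obtain ⟨X0, hX0⟩ := eventually_atTop.1 hev
  set X := max (max X0 M) 1 with hXdef
  have hX1 : (1:ℝ) ≤ X := le_max_right _ _
  have hXpos : (0:ℝ) < X := lt_of_lt_of_le one_pos hX1
  have hXM : M ≤ X := le_trans (le_max_right _ _) (le_max_left _ _)
  have hXX0 : X0 ≤ X := le_trans (le_max_left _ _) (le_max_left _ _)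
  have hposx : ∀ x, X ≤ x → 0 < L x := fun x hx => hLpos x (lt_of_lt_of_le hXpos hx)
  have hrat : ∀ x, X ≤ x → (2:ℝ) ^ (-δ) * L x < L (2 * x) ∧ L (2 * x) < 2 ^ δ * L x := by
    intro x hx
    have hLx := hposx x hx
    have := hX0 x (hXX0.trans hx)
    obtain ⟨h1, h2⟩ := this
    constructor
    · have := (div_lt_iff₀ hLx).1 h2
      rw [← lt_div_iff₀ hLx]
      · linarith [h1]
    · rw [← div_lt_iff₀ hLx]
      exact h2
  rcases hM with hMono | hAnti
  · -- monotone case: upper bound from dyadic, lower bound trivial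
    have hup := aux_dyadic_upper (f := L) hX1 hδ hposx
      (fun x y hx hxy => hMono (Set.mem_Ici.2 (hXM.trans hx)) (Set.mem_Ici.2 (hXM.trans (hx.trans hxy))) hxy)
      (fun x hx => (hrat x hx).2.le)
    have hLX := hposx X le_rfl
    refine ⟨X, L X, 2 ^ δ * L X / X ^ δ, hX1, hLX, by positivity, fun x hx => ?_⟩
    constructor
    · have hx1 : (1:ℝ) ≤ x := hX1.trans hx
      have : x ^ (-δ) ≤ 1 := by
        rw [← Real.rpow_zero x]
        exact Real.rpow_le_rpow_of_exponent_le hx1 (by linarith)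
      calc L X * x ^ (-δ) ≤ L X * 1 := by
            have := hposx X le_rfl; gcongr
        _ = L X := mul_one _
        _ ≤ L x := hMono (Set.mem_Ici.2 hXM) (Set.mem_Ici.2 (hXM.trans hx)) hx
    · exact hup x hx
  · -- antitone case: lower bound from dyadic on 1/L, upper bound trivial
    have hposg : ∀ x, X ≤ x → 0 < (L x)⁻¹ := fun x hx => inv_pos.2 (hposx x hx)
    have hup := aux_dyadic_upper (f := fun x => (L x)⁻¹) hX1 hδ hposg
      (fun x y hx hxy => by
        have := hAnti (Set.mem_Ici.2 (hXM.trans hx)) (Set.mem_Ici.2 (hXM.trans (hx.trans hxy))) hxy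
        exact inv_anti₀ (hposx y (hx.trans hxy)) this)
      (fun x hx => by
        have h1 := (hrat x hx).1
        have hLx := hposx x hx
        have hxpos : (0:ℝ) < x := lt_of_lt_of_le hXpos hx
        have hL2x : 0 < L (2 * x) := hLpos _ (by positivity)
        have h2δ : (0:ℝ) < (2:ℝ) ^ (-δ) := Real.rpow_pos_of_pos two_pos _
        have hinv : (L (2 * x))⁻¹ ≤ ((2:ℝ) ^ (-δ) * L x)⁻¹ :=
          (inv_anti₀ (by positivity) h1.le)
        calc (L (2 * x))⁻¹ ≤ ((2:ℝ) ^ (-δ) * L x)⁻¹ := hinv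
          _ = 2 ^ δ * (L x)⁻¹ := by
              rw [mul_inv, ← Real.rpow_neg two_pos.le, neg_neg])
    have hLX := hposx X le_rfl
    have hCpos : (0:ℝ) < 2 ^ δ * (L X)⁻¹ / X ^ δ := by positivity
    refine ⟨X, (2 ^ δ * (L X)⁻¹ / X ^ δ)⁻¹, L X, hX1, by positivity, hLX, fun x hx => ?_⟩
    have hxpos : (0:ℝ) < x := lt_of_lt_of_le hXpos hx
    have hx1 : (1:ℝ) ≤ x := hX1.trans hx
    constructor
    · have h5 := hup x hx
      have hLx := hposx x hx
      have hxd : (0:ℝ) < x ^ δ := Real.rpow_pos_of_pos hxpos δ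
      have h6 : ((2 ^ δ * (L X)⁻¹ / X ^ δ) * x ^ δ)⁻¹ ≤ L x := by
        rw [← inv_inv (L x)]
        exact inv_anti₀ (by positivity) h5
      calc (2 ^ δ * (L X)⁻¹ / X ^ δ)⁻¹ * x ^ (-δ)
          = ((2 ^ δ * (L X)⁻¹ / X ^ δ) * x ^ δ)⁻¹ := by
            rw [mul_inv, Real.rpow_neg hxpos.le]
        _ ≤ L x := h6
    · have h7 : L x ≤ L X := hAnti (Set.mem_Ici.2 hXM) (Set.mem_Ici.2 (hXM.trans hx)) hx
      have h8 : (1:ℝ) ≤ x ^ δ := Real.one_le_rpow hx1 hδ.le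
      nlinarith
/-- Lower bound on the sampled covariance: if `σ_X(h) = h^{-α}L(h)` with `0 < α < 1`,
`L` slowly varying and ultimately monotone, and `β = sup{γ : E[T₁^γ] < ∞} ∈ (0,1)`,
then for every `ε > 0` one has `σ_Y(h) ≥ C₁ h^{-α/β-ε}` for large `h`; in fact
`σ_Y(h)/h^{-α/β-ε} → ∞`. -/
theorem sampled_cov_lower_bound_heavy_tail
    {Ω : Type*} [MeasureSpace Ω] [IsProbabilityMeasure (ℙ : Measure Ω)]
    (α : ℝ) (hα0 : 0 < α) (hα1 : α < 1)
    (L : ℝ → ℝ) (hLpos : ∀ x, 0 < x → 0 < L x)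
    (hLslow : ∀ c : ℝ, 0 < c → Tendsto (fun x : ℝ => L (c * x) / L x) atTop (nhds 1))
    (hLmono : ∃ M : ℝ, MonotoneOn L (Set.Ici M) ∨ AntitoneOn L (Set.Ici M))
    (σX : ℕ → ℝ) (hσX : ∀ h : ℕ, 1 ≤ h → σX h = (h : ℝ) ^ (-α) * L h)
    (Δ : ℕ → Ω → ℕ)
    (hΔmeas : ∀ j, Measurable (Δ j))
    (hΔpos : ∀ j ω, 1 ≤ Δ j ω)
    (hΔindep : iIndepFun Δ)
    (hΔid : ∀ i j, IdentDistrib (Δ i) (Δ j))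
    (β : ℝ)
    (hβ : β = sSup {γ : ℝ | 0 < γ ∧ Integrable (fun ω => (Δ 0 ω : ℝ) ^ γ)})
    (hβ0 : 0 < β) (hβ1 : β < 1)
    (T : ℕ → Ω → ℕ) (hT : ∀ n ω, T n ω = ∑ j ∈ Finset.range n, Δ j ω)
    (σY : ℕ → ℝ) (hσY : ∀ h, σY h = ∫ ω, σX (T h ω)) :
    ∀ ε : ℝ, 0 < ε →
      (∃ C₁ : ℝ, 0 < C₁ ∧ ∀ᶠ h : ℕ in atTop,
        C₁ * (h : ℝ) ^ (-(α / β) - ε) ≤ σY h) ∧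
      Tendsto (fun h : ℕ => σY h / (h : ℝ) ^ (-(α / β) - ε)) atTop atTop := by
  intro ε hε
  set q : ℝ := α / β + ε with hq
  have hq0 : 0 < q := by positivity
  have hqβ : α / β < q := by simp [hq]; linarith
  -- choose γ close to β with integrability
  set S : Set ℝ := {γ : ℝ | 0 < γ ∧ Integrable (fun ω => (Δ 0 ω : ℝ) ^ γ)} with hS
  have hSne : S.Nonempty := by
    by_contra hc
    rw [Set.not_nonempty_iff_eq_empty] at hc
    rw [hc, Real.sSup_empty] at hβ
    exact absurd hβ (by linarith)
  have hSbdd : BddAbove S := by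
    by_contra hc
    rw [csSup_of_not_bddAbove hc, Real.sSup_empty] at hβ
    exact absurd hβ (by linarith)
  have hαqβ : α / q < β := by
    rw [div_lt_iff₀ hq0]
    have : β * q = α + β * ε := by rw [hq, mul_add, mul_div_assoc', mul_div_right_comm, div_self hβ0.ne', one_mul]
    rw [this]; nlinarith
  set t : ℝ := (α / q + β) / 2 with ht
  have ht1 : α / q < t := by simp [ht]; linarith
  have ht2 : t < β := by simp [ht]; linarith
  have ht0 : 0 < t := by positivity
  obtain ⟨γ, hγS, hγt⟩ := exists_lt_of_lt_csSup hSne (by rw [← hβ]; exact ht2)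
  have hγβ : γ ≤ β := by rw [hβ]; exact le_csSup hSbdd hγS
  have hγ0 : 0 < γ := hγS.1
  have hγ1 : γ ≤ 1 := hγβ.trans hβ1.le
  have hαγq : α / γ < q := by
    have h1 : α / γ < α / t := by
      apply div_lt_div_of_pos_left hα0 ht0 hγt
    have h2 : α / t < q := by
      rw [div_lt_iff₀ ht0]
      rw [div_lt_iff₀ hq0] at ht1
      nlinarith
    linarith
  set δ : ℝ := min ((q - α / γ) * γ / 2) (α / 2) with hδdef
  have hδ0 : 0 < δ := by
    apply lt_min
    · have : 0 < q - α / γ := by linarith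
      positivity
    · positivity
  have hδα : δ < α := lt_of_le_of_lt (min_le_right _ _) (by linarith)
  set s : ℝ := (α + δ) / γ with hsdef
  have hs0 : 0 < s := by positivity
  have hsq : s < q := by
    have h1 : δ ≤ (q - α / γ) * γ / 2 := min_le_left _ _
    rw [hsdef, div_lt_iff₀ hγ0]
    have h4 : α < q * γ := (div_lt_iff₀ hγ0).1 hαγq
    have h5 : α / γ * γ = α := div_mul_cancel₀ α hγ0.ne'
    rw [sub_mul, h5] at h1
    clear_value δ s q
    linarith
  -- slowly varying bounds
  obtain ⟨X, c, C, hX1, hc, hC, hbounds⟩ :=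
    aux_slow_bounds L hLpos (hLslow 2 two_pos) hLmono hδ0
  have hXpos : (0:ℝ) < X := lt_of_lt_of_le one_pos hX1
  -- bounds on σX
  have hσpos : ∀ n : ℕ, 1 ≤ n → 0 < σX n := by
    intro n hn
    rw [hσX n hn]
    have hn0 : (0:ℝ) < (n:ℝ) := by exact_mod_cast hn
    exact mul_pos (Real.rpow_pos_of_pos hn0 _) (hLpos _ hn0)
  have hσlow : ∀ n : ℕ, X ≤ (n:ℝ) → c * (n:ℝ) ^ (-(α + δ)) ≤ σX n := by
    intro n hn
    have hn1 : 1 ≤ n := by exact_mod_cast hX1.trans hn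
    have hn0 : (0:ℝ) < (n:ℝ) := by exact_mod_cast hn1
    rw [hσX n hn1]
    have hb := (hbounds _ hn).1
    calc c * (n:ℝ) ^ (-(α + δ)) = (n:ℝ) ^ (-α) * (c * (n:ℝ) ^ (-δ)) := by
          rw [neg_add, Real.rpow_add hn0]; ring
      _ ≤ (n:ℝ) ^ (-α) * L n := by
          have := Real.rpow_pos_of_pos hn0 (-α); gcongr
  have hσupC : ∀ n : ℕ, X ≤ (n:ℝ) → σX n ≤ C := by
    intro n hn
    have hn1 : 1 ≤ n := by exact_mod_cast hX1.trans hn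
    have hn0 : (0:ℝ) < (n:ℝ) := by exact_mod_cast hn1
    have hn1' : (1:ℝ) ≤ (n:ℝ) := by exact_mod_cast hn1
    rw [hσX n hn1]
    have hb := (hbounds _ hn).2
    calc (n:ℝ) ^ (-α) * L n ≤ (n:ℝ) ^ (-α) * (C * (n:ℝ) ^ δ) := by
          have := Real.rpow_pos_of_pos hn0 (-α); gcongr
      _ = C * (n:ℝ) ^ (δ - α) := by
          rw [sub_eq_neg_add, Real.rpow_add hn0]; ring
      _ ≤ C * 1 := by
          gcongr
          rw [← Real.rpow_zero (n:ℝ)]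
          exact Real.rpow_le_rpow_of_exponent_le hn1' (by linarith)
      _ = C := mul_one C
  -- global bound on σX
  obtain ⟨D, hD0, hD⟩ : ∃ D : ℝ, 0 ≤ D ∧ ∀ n : ℕ, |σX n| ≤ D := by
    set N := ⌈X⌉₊ with hN
    refine ⟨C + ∑ k ∈ Finset.range N, |σX k|, by positivity, fun n => ?_⟩
    by_cases hn : n < N
    · have h1 : |σX n| ≤ ∑ k ∈ Finset.range N, |σX k| :=
        Finset.single_le_sum (f := fun k => |σX k|) (fun k _ => abs_nonneg _)
          (Finset.mem_range.2 hn)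
      linarith
    · push_neg at hn
      have hXn : X ≤ (n:ℝ) := (Nat.le_ceil X).trans (by exact_mod_cast hn)
      have h1 := hσupC n hXn
      have h2 := hσpos n (by exact_mod_cast hX1.trans hXn)
      have h3 : (0:ℝ) ≤ ∑ k ∈ Finset.range N, |σX k| :=
        Finset.sum_nonneg fun k _ => abs_nonneg _
      rw [abs_of_pos h2]; linarith
  -- integrability facts
  set u : ℕ → ℝ := fun n => (n:ℝ) ^ γ with hu
  have humeas : Measurable u := Measurable.of_discrete
  have hΔγint : ∀ j, Integrable (fun ω => (Δ j ω : ℝ) ^ γ) := by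
    intro j
    exact ((hΔid j 0).comp humeas).integrable_iff.2 hγS.2
  have hKeq : ∀ j, ∫ ω, (Δ j ω : ℝ) ^ γ = ∫ ω, (Δ 0 ω : ℝ) ^ γ := fun j =>
    ((hΔid j 0).comp humeas).integral_eq
  set K : ℝ := ∫ ω, (Δ 0 ω : ℝ) ^ γ with hK
  have hK1 : 1 ≤ K := by
    have h0 : (1:ℝ) = ∫ _ : Ω, (1:ℝ) := by simp
    rw [hK, h0]
    apply integral_mono (integrable_const 1) hγS.2
    intro ω
    have : (1:ℝ) ≤ (Δ 0 ω : ℝ) := by exact_mod_cast hΔpos 0 ω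
    exact Real.one_le_rpow this hγ0.le
  have hK0 : 0 < K := lt_of_lt_of_le one_pos hK1
  have hTmeas : ∀ h : ℕ, Measurable fun ω => T h ω := by
    intro h
    have : (fun ω => T h ω) = fun ω => ∑ j ∈ Finset.range h, Δ j ω := funext (hT h)
    rw [this]
    exact Finset.measurable_sum _ fun j _ => hΔmeas j
  have hTge : ∀ (h : ℕ) (ω : Ω), h ≤ T h ω := by
    intro h ω
    rw [hT h ω]
    calc h = ∑ _j ∈ Finset.range h, 1 := by simp
      _ ≤ ∑ j ∈ Finset.range h, Δ j ω := Finset.sum_le_sum fun j _ => hΔpos j ω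
  have hσTint : ∀ h : ℕ, Integrable fun ω => σX (T h ω) := by
    intro h
    apply Integrable.mono' (integrable_const D)
      ((Measurable.of_discrete (f := σX)).comp (hTmeas h)).aestronglyMeasurable
    exact ae_of_all _ fun ω => by rw [Real.norm_eq_abs]; exact hD _
  have hTγle : ∀ (h : ℕ) (ω : Ω),
      ((T h ω : ℕ) : ℝ) ^ γ ≤ ∑ j ∈ Finset.range h, (Δ j ω : ℝ) ^ γ := by
    intro h ω
    rw [hT h ω]
    push_cast
    exact aux_sum_rpow_le _ _ (fun i _ => by positivity) hγ0 hγ1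
  have hsumint : ∀ h : ℕ, Integrable fun ω => ∑ j ∈ Finset.range h, (Δ j ω : ℝ) ^ γ :=
    fun h => integrable_finset_sum _ fun j _ => hΔγint j
  have hTγmeas : ∀ h : ℕ, Measurable fun ω => ((T h ω : ℕ) : ℝ) ^ γ := fun h =>
    humeas.comp (hTmeas h)
  have hTγint : ∀ h : ℕ, Integrable fun ω => ((T h ω : ℕ) : ℝ) ^ γ := by
    intro h
    apply Integrable.mono' (hsumint h) (hTγmeas h).aestronglyMeasurable
    refine ae_of_all _ fun ω => ?_
    rw [Real.norm_eq_abs, abs_of_nonneg (Real.rpow_nonneg (Nat.cast_nonneg _) _)]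
    exact hTγle h ω
  have hTγint_le : ∀ h : ℕ, ∫ ω, ((T h ω : ℕ) : ℝ) ^ γ ≤ h * K := by
    intro h
    calc ∫ ω, ((T h ω : ℕ) : ℝ) ^ γ ≤ ∫ ω, ∑ j ∈ Finset.range h, (Δ j ω : ℝ) ^ γ :=
        integral_mono (hTγint h) (hsumint h) (hTγle h)
      _ = ∑ j ∈ Finset.range h, ∫ ω, (Δ j ω : ℝ) ^ γ :=
        integral_finset_sum _ fun j _ => hΔγint j
      _ = ∑ _j ∈ Finset.range h, K := Finset.sum_congr rfl fun j _ => hKeq j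
      _ = h * K := by simp [mul_comm]
  -- the key eventual lower bound
  set c₂ : ℝ := c * (2 * K) ^ (-s) / 2 with hc₂def
  have hc₂ : 0 < c₂ := by
    have := Real.rpow_pos_of_pos (by linarith : (0:ℝ) < 2 * K) (-s)
    positivity
  have key : ∀ h : ℕ, X ≤ (h : ℝ) → c₂ * (h : ℝ) ^ (-s) ≤ σY h := by
    intro h hXh
    have hh1 : 1 ≤ h := by exact_mod_cast hX1.trans hXh
    have hh0 : (0:ℝ) < (h:ℝ) := by exact_mod_cast hh1
    have hKh0 : (0:ℝ) < 2 * K * h := by positivity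
    -- Markov
    set A : Set Ω := {ω | 2 * K * h ≤ ((T h ω : ℕ) : ℝ) ^ γ} with hA
    have hAmeas : MeasurableSet A := measurableSet_le measurable_const (hTγmeas h)
    have hmark := mul_meas_ge_le_integral_of_nonneg
      (ae_of_all _ fun ω => Real.rpow_nonneg (Nat.cast_nonneg _) γ) (hTγint h) (2 * K * h)
    have hμA : (ℙ A).toReal ≤ 1 / 2 := by
      have h2 : 2 * K * h * (ℙ A).toReal ≤ h * K := le_trans hmark (hTγint_le h)
      rw [← le_div_iff₀' hKh0] at h2
      calc (ℙ A).toReal ≤ h * K / (2 * K * h) := h2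
        _ = 1 / 2 := by field_simp
    have hμAc : 1 / 2 ≤ (ℙ Aᶜ).toReal := by
      have hcompl : (ℙ Aᶜ) = 1 - ℙ A := prob_compl_eq_one_sub hAmeas
      rw [hcompl, ENNReal.toReal_sub_of_le prob_le_one ENNReal.one_ne_top]
      simp only [ENNReal.toReal_one]
      linarith
    -- bound on the event
    set B : ℝ := (2 * K * h) ^ γ⁻¹ with hB
    have hB0 : 0 < B := Real.rpow_pos_of_pos hKh0 _
    have hTleB : ∀ ω, ω ∈ Aᶜ → ((T h ω : ℕ) : ℝ) ≤ B := by
      intro ω hω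
      have hω' : ((T h ω : ℕ) : ℝ) ^ γ < 2 * K * h := by
        simpa [hA] using hω
      have h1 : (((T h ω : ℕ) : ℝ) ^ γ) ^ γ⁻¹ ≤ (2 * K * h) ^ γ⁻¹ :=
        Real.rpow_le_rpow (Real.rpow_nonneg (Nat.cast_nonneg _) _) hω'.le
          (inv_nonneg.2 hγ0.le)
      rwa [Real.rpow_rpow_inv (Nat.cast_nonneg _) hγ0.ne'] at h1
    have hpt : ∀ ω, c * B ^ (-(α + δ)) * Aᶜ.indicator (fun _ => (1:ℝ)) ω ≤ σX (T h ω) := by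
      intro ω
      have hT1 : 1 ≤ T h ω := le_trans hh1 (hTge h ω)
      by_cases hω : ω ∈ Aᶜ
      · rw [Set.indicator_of_mem hω, mul_one]
        have hXT : X ≤ ((T h ω : ℕ) : ℝ) := le_trans hXh (by exact_mod_cast hTge h ω)
        have hT0 : (0:ℝ) < ((T h ω : ℕ) : ℝ) := lt_of_lt_of_le hXpos hXT
        have h1 : B ^ (-(α + δ)) ≤ ((T h ω : ℕ) : ℝ) ^ (-(α + δ)) :=
          (Real.rpow_le_rpow_iff_of_neg hB0 hT0 (by linarith)).2 (hTleB ω hω)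
        calc c * B ^ (-(α + δ)) ≤ c * ((T h ω : ℕ) : ℝ) ^ (-(α + δ)) := by gcongr
          _ ≤ σX (T h ω) := hσlow _ hXT
      · rw [Set.indicator_of_notMem hω, mul_zero]
        exact (hσpos _ hT1).le
    have hindint : Integrable (Aᶜ.indicator (fun _ => (1:ℝ))) :=
      (integrable_const (1:ℝ)).indicator hAmeas.compl
    have hIlow : c * B ^ (-(α + δ)) * (ℙ Aᶜ).toReal ≤ σY h := by
      rw [hσY h]
      calc c * B ^ (-(α + δ)) * (ℙ Aᶜ).toReal
          = ∫ ω, c * B ^ (-(α + δ)) * Aᶜ.indicator (fun _ => (1:ℝ)) ω := by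
            rw [integral_const_mul, integral_indicator_const (1:ℝ) hAmeas.compl]
            simp [Measure.real]
        _ ≤ ∫ ω, σX (T h ω) := integral_mono (hindint.const_mul _) (hσTint h) hpt
    -- rewrite B ^ (-(α+δ))
    have hBrw : B ^ (-(α + δ)) = (2 * K) ^ (-s) * (h : ℝ) ^ (-s) := by
      rw [hB, ← Real.rpow_mul hKh0.le]
      have : γ⁻¹ * -(α + δ) = -s := by
        rw [hsdef]; field_simp
      rw [this, Real.mul_rpow (by positivity) hh0.le]
    have hBpos : 0 < B ^ (-(α + δ)) := Real.rpow_pos_of_pos hB0 _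
    calc c₂ * (h : ℝ) ^ (-s) = c * B ^ (-(α + δ)) * (1 / 2) := by
          rw [hc₂def, hBrw]; ring
      _ ≤ c * B ^ (-(α + δ)) * (ℙ Aᶜ).toReal := by
          have : 0 < c * B ^ (-(α + δ)) := by positivity
          gcongr
      _ ≤ σY h := hIlow
    -- conclusion
  have hexp : -(α / β) - ε = -q := by rw [hq]; ring
  have hmain : Tendsto (fun h : ℕ => σY h / (h : ℝ) ^ (-(α / β) - ε)) atTop atTop := by
    have hqs : 0 < q - s := by linarith
    have t1 : Tendsto (fun h : ℕ => c₂ * (h : ℝ) ^ (q - s)) atTop atTop :=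
      Tendsto.const_mul_atTop hc₂
        ((tendsto_rpow_atTop hqs).comp tendsto_natCast_atTop_atTop)
    apply tendsto_atTop_mono' atTop ?_ t1
    have hev : ∀ᶠ h : ℕ in atTop, X ≤ (h : ℝ) := by
      filter_upwards [eventually_ge_atTop ⌈X⌉₊] with h hh
      exact (Nat.le_ceil X).trans (by exact_mod_cast hh)
    filter_upwards [hev] with h hXh
    have hh1 : 1 ≤ h := by exact_mod_cast hX1.trans hXh
    have hh0 : (0:ℝ) < (h:ℝ) := by exact_mod_cast hh1
    have hk := key h hXh
    have hpow : (0:ℝ) < (h : ℝ) ^ (-(α / β) - ε) := Real.rpow_pos_of_pos hh0 _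
    rw [le_div_iff₀ hpow]
    calc c₂ * (h : ℝ) ^ (q - s) * (h : ℝ) ^ (-(α / β) - ε)
        = c₂ * (h : ℝ) ^ (-s) := by
          rw [hexp, mul_assoc, ← Real.rpow_add hh0]
          ring_nf
      _ ≤ σY h := hk
  refine ⟨⟨1, one_pos, ?_⟩, hmain⟩
  filter_upwards [hmain.eventually_ge_atTop 1, eventually_ge_atTop 1] with h h1 h2
  have hh0 : (0:ℝ) < (h:ℝ) := by exact_mod_cast h2
  have hpow : (0:ℝ) < (h : ℝ) ^ (-(α / β) - ε) := Real.rpow_pos_of_pos hh0 _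
  rw [one_mul]
  have := (le_div_iff₀ hpow).1 h1
  linarith
end

section
/- With ρ(λ)e^{iτ(λ)} = Ŝ(λ) the characteristic function of the sampling law, for all r ∈ [0,1) and θ ∈ (-π, π): (1/4)∫_{-π}^{π} (1/π + P_{rρ(λ)}(τ(λ) - θ) + P_{rρ(λ)}(τ(λ) + θ)) dλ = 1. -/
open Real MeasureTheory

/-- The Poisson kernel `P_s(t) = (1/(2π)) (1-s²)/(1-2s cos t + s²)`. -/
noncomputable def poissonKernel' (s t : ℝ) : ℝ :=
  (1 - s ^ 2) / (2 * π * (1 - 2 * s * Real.cos t + s ^ 2))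

lemma aux_exp_integral (m : ℕ) (hm : 0 < m) :
    ∫ lam in Set.Ioc (-π) π, Complex.exp (Complex.I * m * lam) = 0 := by
  rw [← intervalIntegral.integral_of_le (by linarith [pi_pos] : (-π) ≤ π)]
  have hc : (Complex.I * m) ≠ 0 := by
    apply mul_ne_zero Complex.I_ne_zero
    exact_mod_cast hm.ne'
  rw [integral_exp_mul_complex hc]
  have h1 : Complex.exp (Complex.I * m * (π : ℝ)) = (-1 : ℂ) ^ m := by
    rw [show (Complex.I * m * (π:ℝ) : ℂ) = m * ((π:ℝ) * Complex.I) by push_cast; ring,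
      Complex.exp_nat_mul, Complex.exp_pi_mul_I]
  have h2 : Complex.exp (Complex.I * m * ((-π : ℝ) : ℂ)) = (-1 : ℂ) ^ m := by
    rw [show (Complex.I * m * ((-π:ℝ):ℂ) : ℂ) = m * (-((π:ℝ) * Complex.I)) by push_cast; ring,
      Complex.exp_nat_mul, Complex.exp_neg, Complex.exp_pi_mul_I]
    norm_num
  rw [h1, h2, sub_self, zero_div]

lemma poissonKernel_eq (s t : ℝ) (hs0 : 0 ≤ s) (hs1 : s < 1) :
    poissonKernel' s t = 1/(2*π) +
      (1/π) * (((s:ℂ) * Complex.exp (Complex.I * t)) /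
        (1 - (s:ℂ) * Complex.exp (Complex.I * t))).re := by
  have hπ := pi_pos
  have hsc := Real.sin_sq_add_cos_sq t
  have hD : 0 < 1 - 2*s*Real.cos t + s^2 := by
    nlinarith [Real.cos_le_one t, Real.neg_one_le_cos t, sq_nonneg (1-s), sq_nonneg (1+s)]
  have hz : (s:ℂ) * Complex.exp (Complex.I * t) =
      Complex.ofReal (s * Real.cos t) + Complex.ofReal (s * Real.sin t) * Complex.I := by
    rw [show Complex.I * (t:ℂ) = (t:ℂ) * Complex.I by ring, Complex.exp_mul_I,
      ← Complex.ofReal_cos, ← Complex.ofReal_sin]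
    push_cast
    ring
  rw [hz, Complex.div_re]
  have hre : (Complex.ofReal (s * Real.cos t) + Complex.ofReal (s * Real.sin t) * Complex.I).re
      = s * Real.cos t := by
    simp only [Complex.add_re, Complex.ofReal_re, Complex.mul_re, Complex.I_re, Complex.I_im,
      Complex.ofReal_im, Complex.sub_re, Complex.sub_im, Complex.one_re, Complex.one_im,
      Complex.add_im, Complex.mul_im]
    ring
  have him : (Complex.ofReal (s * Real.cos t) + Complex.ofReal (s * Real.sin t) * Complex.I).im
      = s * Real.sin t := by
    simp only [Complex.add_re, Complex.ofReal_re, Complex.mul_re, Complex.I_re, Complex.I_im,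
      Complex.ofReal_im, Complex.sub_re, Complex.sub_im, Complex.one_re, Complex.one_im,
      Complex.add_im, Complex.mul_im]
    ring
  have hwre : (1 - (Complex.ofReal (s * Real.cos t) + Complex.ofReal (s * Real.sin t) * Complex.I)).re
      = 1 - s * Real.cos t := by
    simp only [Complex.add_re, Complex.ofReal_re, Complex.mul_re, Complex.I_re, Complex.I_im,
      Complex.ofReal_im, Complex.sub_re, Complex.sub_im, Complex.one_re, Complex.one_im,
      Complex.add_im, Complex.mul_im]
    ring
  have hwim : (1 - (Complex.ofReal (s * Real.cos t) + Complex.ofReal (s * Real.sin t) * Complex.I)).im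
      = -(s * Real.sin t) := by
    simp only [Complex.add_re, Complex.ofReal_re, Complex.mul_re, Complex.I_re, Complex.I_im,
      Complex.ofReal_im, Complex.sub_re, Complex.sub_im, Complex.one_re, Complex.one_im,
      Complex.add_im, Complex.mul_im]
    ring
  have hns : Complex.normSq (1 - (Complex.ofReal (s * Real.cos t) + Complex.ofReal (s * Real.sin t) * Complex.I))
      = 1 - 2*s*Real.cos t + s^2 := by
    rw [Complex.normSq_apply, hwre, hwim]
    nlinarith [hsc]
  rw [hre, him, hwre, hwim, hns]
  unfold poissonKernel'
  field_simp
  rw [div_eq_iff (by nlinarith), add_mul, div_mul_cancel₀ _ (by nlinarith)]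
  linear_combination (2*s^2) * hsc

lemma norm_exp_I_nat (j : ℕ) (x : ℝ) : ‖Complex.exp (Complex.I * j * x)‖ = 1 := by
  rw [show (Complex.I * j * x : ℂ) = ((j * x : ℝ) : ℂ) * Complex.I by push_cast; ring]
  exact Complex.norm_exp_ofReal_mul_I _

lemma aux_key_s19 (S : ℕ → ℝ) (hS0 : S 0 = 0) (hSnonneg : ∀ j, 0 ≤ S j)
    (hsum : Summable S)
    (Shat : ℝ → ℂ)
    (hShat : ∀ lam : ℝ, Shat lam = ∑' j : ℕ, (S j : ℂ) * Complex.exp (Complex.I * j * lam))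
    (hcont : Continuous Shat) (hb : ∀ lam, ‖Shat lam‖ ≤ 1) :
    ∀ k m : ℕ, 0 < k + m →
      ∫ lam in Set.Ioc (-π) π, Shat lam ^ k * Complex.exp (Complex.I * m * lam) = 0 := by
  intro k
  induction k with
  | zero =>
    intro m hm
    simpa using aux_exp_integral m (by simpa using hm)
  | succ k ih =>
    intro m _
    set F : ℕ → ℝ → ℂ :=
      fun j lam => (S j : ℂ) * (Shat lam ^ k * Complex.exp (Complex.I * ((j + m : ℕ) : ℂ) * lam))
      with hF
    have hpt : ∀ lam : ℝ, Shat lam ^ (k+1) * Complex.exp (Complex.I * m * lam)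
        = ∑' j, F j lam := by
      intro lam
      have h1 : Shat lam ^ (k+1) * Complex.exp (Complex.I * m * lam)
          = (∑' j : ℕ, (S j : ℂ) * Complex.exp (Complex.I * j * lam)) *
              (Shat lam ^ k * Complex.exp (Complex.I * m * lam)) := by
        rw [← hShat]; ring
      rw [h1, tsum_mul_right.symm]
      apply tsum_congr
      intro j
      have h2 : Complex.exp (Complex.I * j * lam) * Complex.exp (Complex.I * m * lam)
          = Complex.exp (Complex.I * ((j + m : ℕ) : ℂ) * lam) := by
        rw [← Complex.exp_add]; push_cast; ring_nf
      calc (S j : ℂ) * Complex.exp (Complex.I * j * lam) * (Shat lam ^ k * Complex.exp (Complex.I * m * lam))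
          = (S j : ℂ) * (Shat lam ^ k *
              (Complex.exp (Complex.I * j * lam) * Complex.exp (Complex.I * m * lam))) := by ring
        _ = F j lam := by rw [h2]
    have hFcont : ∀ j, Continuous (F j) := by
      intro j
      apply continuous_const.mul
      apply (hcont.pow k).mul
      exact Complex.continuous_exp.comp (continuous_const.mul Complex.continuous_ofReal)
    have hFint : ∀ j, IntegrableOn (F j) (Set.Ioc (-π) π) := by
      intro j; exact (hFcont j).integrableOn_Ioc
    have hFnorm : ∀ j lam, ‖F j lam‖ ≤ S j := by
      intro j lam
      rw [hF]
      simp only [norm_mul, Complex.norm_real, norm_pow]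
      rw [norm_exp_I_nat (j+m) lam]
      have h3 : ‖Shat lam‖ ^ k ≤ 1 := pow_le_one₀ (norm_nonneg _) (hb lam)
      calc |S j| * (‖Shat lam‖ ^ k * 1) ≤ S j * 1 := by
            rw [abs_of_nonneg (hSnonneg j)]
            apply mul_le_mul_of_nonneg_left _ (hSnonneg j)
            simpa using h3
        _ = S j := mul_one _
    have hFintnorm : Summable (fun j => ∫ lam in Set.Ioc (-π) π, ‖F j lam‖) := by
      apply Summable.of_nonneg_of_le
        (fun j => integral_nonneg (fun lam => norm_nonneg _))
        (fun j => ?_) (hsum.mul_left (2 * π))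
      calc (∫ lam in Set.Ioc (-π) π, ‖F j lam‖)
          ≤ ∫ _lam in Set.Ioc (-π) π, S j := by
            apply integral_mono ((hFint j).norm) (integrableOn_const (by
              rw [Real.volume_Ioc]; exact ENNReal.ofReal_ne_top))
            exact fun lam => hFnorm j lam
        _ = (volume (Set.Ioc (-π) π)).toReal * S j := by
            rw [setIntegral_const]; rfl
        _ = 2 * π * S j := by
            rw [Real.volume_Ioc, ENNReal.toReal_ofReal (by linarith [pi_pos])]
            ring_nf
    calc (∫ lam in Set.Ioc (-π) π, Shat lam ^ (k+1) * Complex.exp (Complex.I * m * lam))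
        = ∫ lam in Set.Ioc (-π) π, ∑' j, F j lam := by
          apply integral_congr_ae (Filter.Eventually.of_forall (fun lam => hpt lam))
      _ = ∑' j, ∫ lam in Set.Ioc (-π) π, F j lam :=
          (integral_tsum_of_summable_integral_norm hFint hFintnorm).symm
      _ = 0 := by
        have hterm : ∀ j, (∫ lam in Set.Ioc (-π) π, F j lam) = 0 := by
          intro j
          rw [hF]
          simp only
          rw [MeasureTheory.integral_const_mul]
          match j with
          | 0 => simp [hS0]
          | (n+1) =>
            rw [ih (n+1+m) (by omega)]
            simp
        calc (∑' j, ∫ lam in Set.Ioc (-π) π, F j lam) = ∑' _j : ℕ, (0:ℂ) := tsum_congr hterm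
          _ = 0 := tsum_zero

/-- With `Ŝ(λ) = ρ(λ)e^{iτ(λ)}` the characteristic function of a sampling law on the
positive integers, for all `r ∈ [0,1)` and `θ ∈ (-π,π)`,
`(1/4)∫_{-π}^{π} (1/π + P_{rρ}(τ-θ) + P_{rρ}(τ+θ)) dλ = 1`. -/
theorem poisson_integral_eq_one
    (S : ℕ → ℝ) (hS0 : S 0 = 0) (hSnonneg : ∀ j, 0 ≤ S j)
    (hSsum : ∑' j : ℕ, S j = 1)
    (Shat : ℝ → ℂ)
    (hShat : ∀ lam : ℝ, Shat lam =
      ∑' j : ℕ, (S j : ℂ) * Complex.exp (Complex.I * j * lam))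
    (ρ τ : ℝ → ℝ)
    (hρ : ∀ lam, ρ lam = ‖Shat lam‖)
    (hτ : ∀ lam, τ lam = Complex.arg (Shat lam))
    (r θ : ℝ) (hr0 : 0 ≤ r) (hr1 : r < 1) (hθ1 : -π < θ) (hθ2 : θ < π) :
    (1 / 4) * ∫ lam in (-π)..π,
        (1 / π + poissonKernel' (r * ρ lam) (τ lam - θ)
          + poissonKernel' (r * ρ lam) (τ lam + θ)) = 1 := by
  have hπ : (0:ℝ) < π := pi_pos
  have hle : (-π) ≤ π := by linarith
  have hsum : Summable S := by
    by_contra h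
    rw [tsum_eq_zero_of_not_summable h] at hSsum
    norm_num at hSsum
  have hb : ∀ lam, ‖Shat lam‖ ≤ 1 := by
    intro lam
    rw [hShat lam]
    have hnormterm : ∀ j : ℕ, ‖(S j : ℂ) * Complex.exp (Complex.I * j * lam)‖ = S j := by
      intro j
      rw [norm_mul, norm_exp_I_nat j lam, Complex.norm_real, Real.norm_eq_abs,
        abs_of_nonneg (hSnonneg j), mul_one]
    have hsn : Summable (fun j => ‖(S j : ℂ) * Complex.exp (Complex.I * j * lam)‖) := by
      exact hsum.congr (fun j => (hnormterm j).symm)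
    calc ‖∑' j : ℕ, (S j : ℂ) * Complex.exp (Complex.I * j * lam)‖
        ≤ ∑' j : ℕ, ‖(S j : ℂ) * Complex.exp (Complex.I * j * lam)‖ := norm_tsum_le_tsum_norm hsn
      _ = ∑' j : ℕ, S j := tsum_congr hnormterm
      _ = 1 := hSsum
  have hcont : Continuous Shat := by
    rw [show Shat = fun lam : ℝ => ∑' j : ℕ, (S j : ℂ) * Complex.exp (Complex.I * j * lam)
      from funext hShat]
    apply continuous_tsum (u := S) _ hsum
    · intro j x
      rw [norm_mul, norm_exp_I_nat j x, Complex.norm_real, Real.norm_eq_abs,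
        abs_of_nonneg (hSnonneg j), mul_one]
    · intro j
      exact continuous_const.mul
        (Complex.continuous_exp.comp (continuous_const.mul Complex.continuous_ofReal))
  have hkey := aux_key_s19 S hS0 hSnonneg hsum Shat hShat hcont hb
  have hzlt : ∀ (a : ℂ), ‖a‖ ≤ r → ∀ lam, ‖a * Shat lam‖ < 1 := by
    intro a ha lam
    calc ‖a * Shat lam‖ = ‖a‖ * ‖Shat lam‖ := norm_mul _ _
      _ ≤ r * 1 := mul_le_mul ha (hb lam) (norm_nonneg _) hr0
      _ = r := mul_one r
      _ < 1 := hr1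
  have hne : ∀ (a : ℂ), ‖a‖ ≤ r → ∀ lam, (1 : ℂ) - a * Shat lam ≠ 0 := by
    intro a ha lam h
    have h1 : a * Shat lam = 1 := by
      have := sub_eq_zero.mp h
      exact this.symm
    have := hzlt a ha lam
    rw [h1] at this
    simp at this
  have hgeom : ∀ (a : ℂ), ‖a‖ ≤ r →
      (∫ lam in Set.Ioc (-π) π, (a * Shat lam) / (1 - a * Shat lam)) = 0 := by
    intro a ha
    set F : ℕ → ℝ → ℂ := fun k lam => (a * Shat lam) ^ (k + 1) with hF
    have hpt : ∀ lam, (a * Shat lam) / (1 - a * Shat lam) = ∑' k, F k lam := by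
      intro lam
      have h1 : ∑' k : ℕ, (a * Shat lam) ^ k = (1 - a * Shat lam)⁻¹ :=
        tsum_geometric_of_norm_lt_one (hzlt a ha lam)
      calc (a * Shat lam) / (1 - a * Shat lam)
          = (a * Shat lam) * (1 - a * Shat lam)⁻¹ := div_eq_mul_inv _ _
        _ = (a * Shat lam) * ∑' k : ℕ, (a * Shat lam) ^ k := by rw [h1]
        _ = ∑' k : ℕ, (a * Shat lam) * (a * Shat lam) ^ k := tsum_mul_left.symm
        _ = ∑' k, F k lam := tsum_congr fun k => by rw [hF]; ring
    have hFint : ∀ k, IntegrableOn (F k) (Set.Ioc (-π) π) := by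
      intro k
      exact (((continuous_const.mul hcont).pow (k+1))).integrableOn_Ioc
    have hFnorm : ∀ k lam, ‖F k lam‖ ≤ r ^ (k + 1) := by
      intro k lam
      rw [hF]
      simp only [norm_pow]
      apply pow_le_pow_left₀ (norm_nonneg _)
      calc ‖a * Shat lam‖ = ‖a‖ * ‖Shat lam‖ := norm_mul _ _
        _ ≤ r * 1 := mul_le_mul ha (hb lam) (norm_nonneg _) hr0
        _ = r := mul_one r
    have hFintnorm : Summable (fun k => ∫ lam in Set.Ioc (-π) π, ‖F k lam‖) := by
      apply Summable.of_nonneg_of_le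
        (fun k => integral_nonneg (fun lam => norm_nonneg _))
        (fun k => ?_)
        (((summable_geometric_of_lt_one hr0 hr1).mul_left r).mul_left (2 * π))
      calc (∫ lam in Set.Ioc (-π) π, ‖F k lam‖)
          ≤ ∫ _lam in Set.Ioc (-π) π, r ^ (k+1) := by
            apply integral_mono ((hFint k).norm) (integrableOn_const (by
              rw [Real.volume_Ioc]; exact ENNReal.ofReal_ne_top))
            exact fun lam => hFnorm k lam
        _ = (volume (Set.Ioc (-π) π)).toReal * r ^ (k+1) := by rw [setIntegral_const]; rfl
        _ = 2 * π * (r * r ^ k) := by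
            rw [Real.volume_Ioc, ENNReal.toReal_ofReal (by linarith)]
            ring
    have hterm : ∀ k, (∫ lam in Set.Ioc (-π) π, F k lam) = 0 := by
      intro k
      have h2 : ∀ lam : ℝ, F k lam = a ^ (k+1) * Shat lam ^ (k+1) := by
        intro lam; rw [hF]; ring
      calc (∫ lam in Set.Ioc (-π) π, F k lam)
          = ∫ lam in Set.Ioc (-π) π, a ^ (k+1) * Shat lam ^ (k+1) :=
            integral_congr_ae (Filter.Eventually.of_forall h2)
        _ = a ^ (k+1) * ∫ lam in Set.Ioc (-π) π, Shat lam ^ (k+1) :=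
            MeasureTheory.integral_const_mul _ _
        _ = 0 := by
            have h3 := hkey (k+1) 0 (by omega)
            simp only [Nat.cast_zero, mul_zero, zero_mul, Complex.exp_zero, mul_one] at h3
            rw [h3, mul_zero]
    calc (∫ lam in Set.Ioc (-π) π, (a * Shat lam) / (1 - a * Shat lam))
        = ∫ lam in Set.Ioc (-π) π, ∑' k, F k lam :=
          integral_congr_ae (Filter.Eventually.of_forall hpt)
      _ = ∑' k, ∫ lam in Set.Ioc (-π) π, F k lam :=
          (integral_tsum_of_summable_integral_norm hFint hFintnorm).symm
      _ = 0 := by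
        calc (∑' k, ∫ lam in Set.Ioc (-π) π, F k lam) = ∑' _k : ℕ, (0:ℂ) := tsum_congr hterm
          _ = 0 := tsum_zero
  -- polar decomposition
  have hpolar : ∀ lam, ((ρ lam : ℝ) : ℂ) * Complex.exp ((τ lam : ℝ) * Complex.I) = Shat lam := by
    intro lam
    rw [hρ, hτ]
    exact_mod_cast Complex.norm_mul_exp_arg_mul_I (Shat lam)
  set a₁ : ℂ := (r : ℂ) * Complex.exp (-(Complex.I * θ)) with ha₁
  set a₂ : ℂ := (r : ℂ) * Complex.exp (Complex.I * θ) with ha₂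
  have hna₁ : ‖a₁‖ ≤ r := by
    rw [ha₁, norm_mul, show (-(Complex.I * (θ:ℂ))) = ((-θ : ℝ) : ℂ) * Complex.I by push_cast; ring,
      Complex.norm_exp_ofReal_mul_I, Complex.norm_real, Real.norm_eq_abs, abs_of_nonneg hr0, mul_one]
  have hna₂ : ‖a₂‖ ≤ r := by
    rw [ha₂, norm_mul, show (Complex.I * (θ:ℂ)) = ((θ : ℝ) : ℂ) * Complex.I by push_cast; ring,
      Complex.norm_exp_ofReal_mul_I, Complex.norm_real, Real.norm_eq_abs, abs_of_nonneg hr0, mul_one]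
  have e1 : ∀ lam, ((r * ρ lam : ℝ) : ℂ) * Complex.exp (Complex.I * ((τ lam - θ : ℝ) : ℂ))
      = a₁ * Shat lam := by
    intro lam
    push_cast
    rw [show Complex.I * ((τ lam : ℂ) - (θ : ℂ)) = (τ lam : ℂ) * Complex.I + (-(Complex.I * θ)) by ring,
      Complex.exp_add]
    rw [ha₁, ← hpolar lam]
    ring
  have e2 : ∀ lam, ((r * ρ lam : ℝ) : ℂ) * Complex.exp (Complex.I * ((τ lam + θ : ℝ) : ℂ))
      = a₂ * Shat lam := by
    intro lam
    push_cast
    rw [show Complex.I * ((τ lam : ℂ) + (θ : ℂ)) = (τ lam : ℂ) * Complex.I + Complex.I * θ by ring,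
      Complex.exp_add]
    rw [ha₂, ← hpolar lam]
    ring
  have hs0 : ∀ lam, 0 ≤ r * ρ lam := by
    intro lam
    apply mul_nonneg hr0
    rw [hρ]
    exact norm_nonneg _
  have hs1 : ∀ lam, r * ρ lam < 1 := by
    intro lam
    have h1 : ρ lam ≤ 1 := by
      rw [hρ]
      exact hb lam
    have h2 : 0 ≤ ρ lam := by rw [hρ]; exact norm_nonneg _
    nlinarith
  have hpt : ∀ lam, (1 / π + poissonKernel' (r * ρ lam) (τ lam - θ)
        + poissonKernel' (r * ρ lam) (τ lam + θ))
      = 2/π + (1/π) * ((a₁ * Shat lam) / (1 - a₁ * Shat lam)).re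
          + (1/π) * ((a₂ * Shat lam) / (1 - a₂ * Shat lam)).re := by
    intro lam
    rw [poissonKernel_eq _ _ (hs0 lam) (hs1 lam), poissonKernel_eq _ _ (hs0 lam) (hs1 lam),
      e1 lam, e2 lam]
    field_simp
    ring
  have hgc : ∀ (a : ℂ), ‖a‖ ≤ r →
      Continuous (fun lam => ((a * Shat lam) / (1 - a * Shat lam)).re) := by
    intro a ha
    apply Complex.continuous_re.comp
    exact (continuous_const.mul hcont).div (continuous_const.sub (continuous_const.mul hcont))
      (fun lam => hne a ha lam)
  have hg1int : IntegrableOn (fun lam => (1/π) * ((a₁ * Shat lam) / (1 - a₁ * Shat lam)).re)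
      (Set.Ioc (-π) π) := (continuous_const.mul (hgc a₁ hna₁)).integrableOn_Ioc
  have hg2int : IntegrableOn (fun lam => (1/π) * ((a₂ * Shat lam) / (1 - a₂ * Shat lam)).re)
      (Set.Ioc (-π) π) := (continuous_const.mul (hgc a₂ hna₂)).integrableOn_Ioc
  have hconstint : IntegrableOn (fun _lam : ℝ => 2/π) (Set.Ioc (-π) π) :=
    continuous_const.integrableOn_Ioc
  have hgzero : ∀ (a : ℂ), ‖a‖ ≤ r →
      (∫ lam in Set.Ioc (-π) π, (1/π) * ((a * Shat lam) / (1 - a * Shat lam)).re) = 0 := by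
    intro a ha
    rw [MeasureTheory.integral_const_mul]
    have h4 : IntegrableOn (fun lam => (a * Shat lam) / (1 - a * Shat lam)) (Set.Ioc (-π) π) :=
      ((continuous_const.mul hcont).div (continuous_const.sub (continuous_const.mul hcont))
        (fun lam => hne a ha lam)).integrableOn_Ioc
    have h5 : (∫ lam in Set.Ioc (-π) π, ((a * Shat lam) / (1 - a * Shat lam)).re)
        = (∫ lam in Set.Ioc (-π) π, (a * Shat lam) / (1 - a * Shat lam)).re := by
      have := Complex.reCLM.integral_comp_comm h4
      simpa using this
    rw [h5, hgeom a ha]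
    simp
  rw [intervalIntegral.integral_of_le hle]
  rw [integral_congr_ae (Filter.Eventually.of_forall hpt)]
  have h12 : IntegrableOn (fun lam => 2/π + (1/π) * ((a₁ * Shat lam) / (1 - a₁ * Shat lam)).re)
      (Set.Ioc (-π) π) := hconstint.add hg1int
  rw [integral_add h12 hg2int, integral_add hconstint hg1int]
  rw [hgzero a₁ hna₁, hgzero a₂ hna₂]
  rw [setIntegral_const]
  rw [Real.volume_real_Ioc_of_le hle, smul_eq_mul]
  field_simp
  ring
end
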